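/- arXiv:1505.00304 — 5 statements merged into one kernel-verified Lean document; each statement's English description precedes it below -/
import Mathlib

section
/- The function t \mapsto (F(t) - 1)/\sin(t/4), where F(t) = {}_2F_1(1/2, 1/2; 1; \sin^2(t/4)) = \sum_{m\ge 0} ((1/2)_m/m!)^2 \sin^{2m}(t/4), is positive and monotone increasing on (0, \pi]. -/
/-- The Gauss hypergeometric function ₂F₁(1/2, 1/2; 1; x) as a power series. -/
noncomputable def gaussF (x : ℝ) : ℝ :=
  ∑' m : ℕ, (((ascPochhammer ℝ m).eval (1 / 2 : ℝ)) / (Nat.factorial m : ℝ)) ^ 2 * x ^ m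

noncomputable def aCoef (m : ℕ) : ℝ :=
  (((ascPochhammer ℝ m).eval (1 / 2 : ℝ)) / (Nat.factorial m : ℝ)) ^ 2

lemma poch_bounds (m : ℕ) :
    0 ≤ (ascPochhammer ℝ m).eval (1 / 2 : ℝ) ∧
      (ascPochhammer ℝ m).eval (1 / 2 : ℝ) ≤ (Nat.factorial m : ℝ) := by
  induction m with
  | zero => simp
  | succ n ih =>
    rw [ascPochhammer_succ_eval]
    have hn : (0 : ℝ) ≤ (n : ℝ) := Nat.cast_nonneg n
    refine ⟨mul_nonneg ih.1 (by linarith), ?_⟩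
    have h2 : (1 / 2 : ℝ) + n ≤ (n : ℝ) + 1 := by linarith
    calc (ascPochhammer ℝ n).eval (1/2 : ℝ) * ((1/2 : ℝ) + n)
        ≤ (Nat.factorial n : ℝ) * ((n : ℝ) + 1) := by
          apply mul_le_mul ih.2 h2 (by linarith) (by positivity)
      _ = (Nat.factorial (n + 1) : ℝ) := by
          rw [Nat.factorial_succ]; push_cast; ring

lemma aCoef_nonneg (m : ℕ) : 0 ≤ aCoef m := sq_nonneg _

lemma aCoef_le_one (m : ℕ) : aCoef m ≤ 1 := by
  obtain ⟨h0, h1⟩ := poch_bounds m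
  have hf : (0 : ℝ) < (Nat.factorial m : ℝ) := by
    exact_mod_cast Nat.factorial_pos m
  have hq0 : 0 ≤ (ascPochhammer ℝ m).eval (1/2 : ℝ) / (Nat.factorial m : ℝ) :=
    div_nonneg h0 hf.le
  have hq1 : (ascPochhammer ℝ m).eval (1/2 : ℝ) / (Nat.factorial m : ℝ) ≤ 1 :=
    (div_le_one hf).mpr h1
  exact pow_le_one₀ hq0 hq1

lemma aCoef_one : aCoef 1 = 1 / 4 := by
  simp [aCoef]; norm_num

lemma summable_main {x : ℝ} (hx0 : 0 ≤ x) (hx : x ≤ 1 / 2) :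
    Summable (fun m : ℕ => aCoef m * x ^ m) := by
  refine Summable.of_nonneg_of_le
    (fun m => mul_nonneg (aCoef_nonneg m) (pow_nonneg hx0 m)) (fun m => ?_)
    (summable_geometric_of_lt_one (by norm_num) (by norm_num : (1/2 : ℝ) < 1))
  calc aCoef m * x ^ m ≤ 1 * x ^ m :=
        mul_le_mul_of_nonneg_right (aCoef_le_one m) (pow_nonneg hx0 m)
    _ = x ^ m := one_mul _
    _ ≤ (1/2 : ℝ) ^ m := pow_le_pow_left₀ hx0 hx m

lemma summable_odd {s : ℝ} (h0 : 0 ≤ s) (hs : s ^ 2 ≤ 1 / 2) :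
    Summable (fun m : ℕ => aCoef (m + 1) * s ^ (2 * m + 1)) := by
  have hs1 : s ≤ 1 := by nlinarith
  refine Summable.of_nonneg_of_le
    (fun m => mul_nonneg (aCoef_nonneg _) (pow_nonneg h0 _)) (fun m => ?_)
    (summable_geometric_of_lt_one (by norm_num) (by norm_num : (1/2 : ℝ) < 1))
  have key : s ^ (2 * m + 1) = (s ^ 2) ^ m * s := by
    rw [pow_succ, pow_mul]
  calc aCoef (m + 1) * s ^ (2 * m + 1)
      ≤ 1 * s ^ (2 * m + 1) :=
        mul_le_mul_of_nonneg_right (aCoef_le_one _) (pow_nonneg h0 _)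
    _ = (s ^ 2) ^ m * s := by rw [one_mul, key]
    _ ≤ (1/2 : ℝ) ^ m * 1 := by
        apply mul_le_mul (pow_le_pow_left₀ (by positivity) hs m) hs1 h0 (by positivity)
    _ = (1/2 : ℝ) ^ m := mul_one _

noncomputable def hFun (s : ℝ) : ℝ := ∑' m : ℕ, aCoef (m + 1) * s ^ (2 * m + 1)

lemma gaussF_key {s : ℝ} (h0 : 0 < s) (hs : s ^ 2 ≤ 1 / 2) :
    (gaussF (s ^ 2) - 1) / s = hFun s := by
  have hx0 : (0 : ℝ) ≤ s ^ 2 := sq_nonneg s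
  have hsum : Summable (fun m : ℕ => aCoef m * (s ^ 2) ^ m) := summable_main hx0 hs
  have h1 : gaussF (s ^ 2) = ∑' m : ℕ, aCoef m * (s ^ 2) ^ m := rfl
  have h2 : gaussF (s ^ 2) = 1 + ∑' m : ℕ, aCoef (m + 1) * (s ^ 2) ^ (m + 1) := by
    rw [h1, Summable.tsum_eq_zero_add hsum]
    simp [aCoef]
  have h3 : ∀ m : ℕ, aCoef (m + 1) * (s ^ 2) ^ (m + 1)
      = s * (aCoef (m + 1) * s ^ (2 * m + 1)) := by
    intro m
    have : (s ^ 2) ^ (m + 1) = s * s ^ (2 * m + 1) := by ring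
    rw [this]; ring
  have h4 : gaussF (s ^ 2) - 1 = s * hFun s := by
    rw [h2]
    rw [tsum_congr h3, tsum_mul_left]
    unfold hFun
    ring
  rw [h4, mul_div_cancel_left₀ _ h0.ne']

lemma hFun_pos {s : ℝ} (h0 : 0 < s) (hs : s ^ 2 ≤ 1 / 2) : 0 < hFun s := by
  refine Summable.tsum_pos (summable_odd h0.le hs)
    (fun m => mul_nonneg (aCoef_nonneg _) (pow_nonneg h0.le _)) 0 ?_
  show 0 < aCoef (0 + 1) * s ^ (2 * 0 + 1)
  norm_num [aCoef_one]
  linarith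

lemma hFun_mono {s₁ s₂ : ℝ} (h0 : 0 ≤ s₁) (h12 : s₁ ≤ s₂) (hs : s₂ ^ 2 ≤ 1 / 2) :
    hFun s₁ ≤ hFun s₂ := by
  have hs₁ : s₁ ^ 2 ≤ 1 / 2 := le_trans (by nlinarith) hs
  refine Summable.tsum_le_tsum (fun m => ?_) (summable_odd h0 hs₁)
    (summable_odd (h0.trans h12) hs)
  exact mul_le_mul_of_nonneg_left (pow_le_pow_left₀ h0 h12 _) (aCoef_nonneg _)

lemma sin_facts {t : ℝ} (ht : t ∈ Set.Ioc (0 : ℝ) Real.pi) :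
    0 < Real.sin (t / 4) ∧ Real.sin (t / 4) ^ 2 ≤ 1 / 2 := by
  have hpi := Real.pi_pos
  obtain ⟨ht0, ht1⟩ := ht
  have hlt : t / 4 < Real.pi := by linarith
  have hpos : 0 < Real.sin (t / 4) := Real.sin_pos_of_pos_of_lt_pi (by linarith) hlt
  have hmem : t / 4 ∈ Set.Icc (-(Real.pi / 2)) (Real.pi / 2) :=
    ⟨by linarith, by linarith⟩
  have hmem' : Real.pi / 4 ∈ Set.Icc (-(Real.pi / 2)) (Real.pi / 2) :=
    ⟨by linarith, by linarith⟩
  have hle : Real.sin (t / 4) ≤ Real.sin (Real.pi / 4) :=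
    Real.strictMonoOn_sin.monotoneOn hmem hmem' (by linarith)
  have hval : Real.sin (Real.pi / 4) = Real.sqrt 2 / 2 := Real.sin_pi_div_four
  have hsq : Real.sin (Real.pi / 4) ^ 2 = 1 / 2 := by
    rw [hval, div_pow, Real.sq_sqrt (by norm_num : (2:ℝ) ≥ 0)]
    norm_num
  refine ⟨hpos, ?_⟩
  calc Real.sin (t / 4) ^ 2 ≤ Real.sin (Real.pi / 4) ^ 2 :=
        pow_le_pow_left₀ hpos.le hle 2
    _ = 1 / 2 := hsq

lemma sin_mono {t₁ t₂ : ℝ} (h₁ : t₁ ∈ Set.Ioc (0 : ℝ) Real.pi)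
    (h₂ : t₂ ∈ Set.Ioc (0 : ℝ) Real.pi) (h : t₁ ≤ t₂) :
    Real.sin (t₁ / 4) ≤ Real.sin (t₂ / 4) := by
  have hpi := Real.pi_pos
  have m₁ : t₁ / 4 ∈ Set.Icc (-(Real.pi / 2)) (Real.pi / 2) :=
    ⟨by linarith [h₁.1], by linarith [h₁.2]⟩
  have m₂ : t₂ / 4 ∈ Set.Icc (-(Real.pi / 2)) (Real.pi / 2) :=
    ⟨by linarith [h₂.1], by linarith [h₂.2]⟩
  exact Real.strictMonoOn_sin.monotoneOn m₁ m₂ (by linarith)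

theorem varphi_minus_one_over_sin_pos_mono :
    (∀ t ∈ Set.Ioc (0 : ℝ) Real.pi,
        0 < (gaussF (Real.sin (t / 4) ^ 2) - 1) / Real.sin (t / 4)) ∧
      MonotoneOn (fun t : ℝ => (gaussF (Real.sin (t / 4) ^ 2) - 1) / Real.sin (t / 4))
        (Set.Ioc (0 : ℝ) Real.pi) := by
  constructor
  · intro t ht
    obtain ⟨hpos, hsq⟩ := sin_facts ht
    rw [gaussF_key hpos hsq]
    exact hFun_pos hpos hsq
  · intro t₁ h₁ t₂ h₂ hle
    obtain ⟨hp₁, hs₁⟩ := sin_facts h₁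
    obtain ⟨hp₂, hs₂⟩ := sin_facts h₂
    simp only
    rw [gaussF_key hp₁ hs₁, gaussF_key hp₂ hs₂]
    exact hFun_mono hp₁.le (sin_mono h₁ h₂ hle) hs₂
end

section
/- The function t \mapsto 1/\sin(t/4) - 4/t is positive and monotone increasing on (0, \pi], and for all t in (0,\pi], 0 < \varphi(t)/\sin(t/4) - 4/t \le \sqrt{2}\, F(1/2) - 4/\pi, where \varphi(t) = F(\sin^2(t/4)) and F(x) = {}_2F_1(1/2,1/2;1;x). -/
namespace CscAux

noncomputable def c (m : ℕ) : ℝ :=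
  (((ascPochhammer ℝ m).eval (1 / 2 : ℝ)) / (Nat.factorial m : ℝ)) ^ 2

lemma gaussF_eq (x : ℝ) : gaussF x = ∑' m : ℕ, c m * x ^ m := rfl

lemma c_zero : c 0 = 1 := by simp [c]

lemma c_nonneg (m : ℕ) : 0 ≤ c m := sq_nonneg _

lemma poch_le_fact (m : ℕ) : (ascPochhammer ℝ m).eval (1 / 2 : ℝ) ≤ (Nat.factorial m : ℝ) := by
  induction m with
  | zero => simp
  | succ n ih =>
    rw [ascPochhammer_succ_eval, Nat.factorial_succ, Nat.cast_mul]
    have hpos : 0 < (ascPochhammer ℝ n).eval (1 / 2 : ℝ) :=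
      ascPochhammer_pos n _ (by norm_num)
    have h2 : (1 / 2 : ℝ) + n ≤ (n + 1 : ℕ) := by push_cast; linarith
    have h3 : (0:ℝ) < (1/2 : ℝ) + n := by positivity
    calc (ascPochhammer ℝ n).eval (1 / 2 : ℝ) * ((1/2:ℝ) + n)
        ≤ (Nat.factorial n : ℝ) * ((n:ℝ) + 1) := by
          have := mul_le_mul ih h2 h3.le (Nat.cast_nonneg _)
          push_cast at this ⊢; linarith
      _ = ((n + 1 : ℕ) : ℝ) * (Nat.factorial n : ℝ) := by push_cast; ring

lemma c_le_one (m : ℕ) : c m ≤ 1 := by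
  have hfac : (0:ℝ) < (Nat.factorial m : ℝ) := by positivity
  have hpos : 0 < (ascPochhammer ℝ m).eval (1 / 2 : ℝ) :=
    ascPochhammer_pos m _ (by norm_num)
  have h1 : (((ascPochhammer ℝ m).eval (1 / 2 : ℝ)) / (Nat.factorial m : ℝ)) ≤ 1 :=
    (div_le_one hfac).2 (poch_le_fact m)
  have h0 : 0 ≤ (((ascPochhammer ℝ m).eval (1 / 2 : ℝ)) / (Nat.factorial m : ℝ)) := by positivity
  rw [c, sq]
  exact mul_le_one₀ h1 h0 h1

lemma summable_c {x : ℝ} (hx0 : 0 ≤ x) (hx1 : x < 1) : Summable (fun m : ℕ => c m * x ^ m) := by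
  refine Summable.of_nonneg_of_le (fun m => mul_nonneg (c_nonneg m) (pow_nonneg hx0 m))
    (fun m => ?_) (summable_geometric_of_lt_one hx0 hx1)
  have := mul_le_mul_of_nonneg_right (c_le_one m) (pow_nonneg hx0 m)
  simpa using this

lemma gaussF_ge_one {x : ℝ} (hx0 : 0 ≤ x) (hx1 : x < 1) : 1 ≤ gaussF x := by
  rw [gaussF_eq]
  have h := Summable.le_tsum (summable_c hx0 hx1) 0 (fun j _ => mul_nonneg (c_nonneg j) (pow_nonneg hx0 j))
  simpa [c_zero] using h

set_option maxHeartbeats 1000000 in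
lemma gauss_upper {s s0 : ℝ} (hs : 0 < s) (hss0 : s ≤ s0) (hs01 : s0 < 1) :
    gaussF (s ^ 2) ≤ 1 + (s / s0) * (gaussF (s0 ^ 2) - 1) := by
  have hs0 : 0 < s0 := lt_of_lt_of_le hs hss0
  have hsq : s ^ 2 < 1 := by nlinarith
  have hsq0 : s0 ^ 2 < 1 := by nlinarith
  have hsum : Summable (fun m : ℕ => c m * (s ^ 2) ^ m) := summable_c (by positivity) hsq
  have hsum0 : Summable (fun m : ℕ => c m * (s0 ^ 2) ^ m) := summable_c (by positivity) hsq0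
  have hsum' : Summable (fun m : ℕ => c (m + 1) * (s ^ 2) ^ (m + 1)) :=
    (summable_nat_add_iff 1).2 hsum
  have hsum0' : Summable (fun m : ℕ => c (m + 1) * (s0 ^ 2) ^ (m + 1)) :=
    (summable_nat_add_iff 1).2 hsum0
  have e1 : gaussF (s ^ 2) = 1 + ∑' m : ℕ, c (m + 1) * (s ^ 2) ^ (m + 1) := by
    rw [gaussF_eq, Summable.tsum_eq_zero_add hsum, c_zero]; simp
  have e0 : gaussF (s0 ^ 2) = 1 + ∑' m : ℕ, c (m + 1) * (s0 ^ 2) ^ (m + 1) := by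
    rw [gaussF_eq, Summable.tsum_eq_zero_add hsum0, c_zero]; simp
  have hterm : ∀ m : ℕ, c (m + 1) * (s ^ 2) ^ (m + 1) ≤
      (s / s0) * (c (m + 1) * (s0 ^ 2) ^ (m + 1)) := by
    intro m
    have hp : s ^ (2 * m + 1) ≤ s0 ^ (2 * m + 1) := pow_le_pow_left₀ hs.le hss0 _
    have h1 : (s ^ 2) ^ (m + 1) = s * s ^ (2 * m + 1) := by ring
    have h2 : (s / s0) * (s0 ^ 2) ^ (m + 1) = s * s0 ^ (2 * m + 1) := by
      field_simp; ring
    have h3 : (s ^ 2) ^ (m + 1) ≤ (s / s0) * (s0 ^ 2) ^ (m + 1) := by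
      rw [h1, h2]; exact mul_le_mul_of_nonneg_left hp hs.le
    calc c (m + 1) * (s ^ 2) ^ (m + 1) ≤ c (m + 1) * ((s / s0) * (s0 ^ 2) ^ (m + 1)) :=
          mul_le_mul_of_nonneg_left h3 (c_nonneg _)
      _ = (s / s0) * (c (m + 1) * (s0 ^ 2) ^ (m + 1)) := by ring
  have htsum : (∑' m : ℕ, c (m + 1) * (s ^ 2) ^ (m + 1)) ≤
      ∑' m : ℕ, (s / s0) * (c (m + 1) * (s0 ^ 2) ^ (m + 1)) :=
    Summable.tsum_le_tsum hterm hsum' (hsum0'.mul_left _)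
  rw [e1, e0]
  rw [tsum_mul_left] at htsum
  simpa using htsum

end CscAux

open CscAux Real in
lemma hasDeriv_f {t : ℝ} (ht0 : 0 < t) (htpi : t ≤ Real.pi) :
    HasDerivAt (fun t : ℝ => 1 / Real.sin (t / 4) - 4 / t)
      (4 / t ^ 2 - Real.cos (t / 4) / (4 * Real.sin (t / 4) ^ 2)) t := by
  have hx : 0 < t / 4 := by linarith
  have hxpi : t / 4 < Real.pi := by
    have := Real.pi_pos; linarith
  have hsin : 0 < Real.sin (t / 4) := Real.sin_pos_of_pos_of_lt_pi hx hxpi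
  have h1 : HasDerivAt (fun t : ℝ => t / 4) (1 / 4) t := by
    simpa using (hasDerivAt_id t).div_const 4
  have h2 : HasDerivAt (fun t : ℝ => Real.sin (t / 4)) (Real.cos (t / 4) * (1 / 4)) t :=
    by have := (Real.hasDerivAt_sin (t / 4)).comp t h1; exact this
  have h3 : HasDerivAt (fun t : ℝ => (Real.sin (t / 4))⁻¹)
      (-(Real.cos (t / 4) * (1 / 4)) / Real.sin (t / 4) ^ 2) t := h2.inv hsin.ne'
  have h4 : HasDerivAt (fun t : ℝ => 4 * t⁻¹) (4 * (-(t ^ 2)⁻¹)) t :=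
    (hasDerivAt_inv ht0.ne').const_mul 4
  have h5 := h3.sub h4
  have hfun : (fun t : ℝ => 1 / Real.sin (t / 4) - 4 / t) =
      fun t : ℝ => (Real.sin (t / 4))⁻¹ - 4 * t⁻¹ := by
    funext u; simp [one_div, div_eq_mul_inv]
  rw [hfun]
  refine HasDerivAt.congr_deriv h5 ?_
  ring

lemma deriv_nonneg_f {t : ℝ} (ht0 : 0 < t) (htpi : t ≤ Real.pi) :
    0 ≤ 4 / t ^ 2 - Real.cos (t / 4) / (4 * Real.sin (t / 4) ^ 2) := by
  set x := t / 4 with hxdef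
  have hx : 0 < x := by simp only [hxdef]; linarith
  have hx1 : x ≤ 1 := by
    have := Real.pi_le_four; simp only [hxdef]; linarith
  have hxpi : x < Real.pi := by have := Real.pi_pos; simp only [hxdef]; linarith
  have hsin : 0 < Real.sin x := Real.sin_pos_of_pos_of_lt_pi hx hxpi
  have h1 : x - x ^ 3 / 4 < Real.sin x := by have := Real.sin_gt_sub_cube hx; linarith [pow_pos hx 3]
  have h2 : Real.cos x ≤ 1 - x ^ 2 / 2 + x ^ 4 * (5 / 96) := by
    have := Real.cos_bound (x := x) (by rw [abs_of_pos hx]; exact hx1)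
    rw [abs_of_pos hx] at this
    have := abs_le.1 this
    linarith [this.2]
  have h3 : 0 ≤ x - x ^ 3 / 4 := by nlinarith
  have hmain : x ^ 2 * Real.cos x ≤ Real.sin x ^ 2 := by
    nlinarith [sq_nonneg x, pow_pos hx 6, sq_nonneg (x - x ^ 3 / 4)]
  have ht : t = 4 * x := by simp [hxdef]; ring
  rw [sub_nonneg, div_le_div_iff₀ (by positivity) (by positivity), ht]
  nlinarith [hmain, sq_nonneg x]

lemma mono_f : MonotoneOn (fun t : ℝ => 1 / Real.sin (t / 4) - 4 / t) (Set.Ioc (0 : ℝ) Real.pi) := by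
  have hconv : Convex ℝ (Set.Ioc (0 : ℝ) Real.pi) := convex_Ioc _ _
  have hint : interior (Set.Ioc (0 : ℝ) Real.pi) = Set.Ioo 0 Real.pi := interior_Ioc
  refine monotoneOn_of_deriv_nonneg hconv ?_ ?_ ?_
  · intro x hx
    exact (hasDeriv_f hx.1 hx.2).continuousAt.continuousWithinAt
  · intro x hx
    rw [hint] at hx
    exact (hasDeriv_f hx.1 hx.2.le).differentiableAt.differentiableWithinAt
  · intro x hx
    rw [hint] at hx
    rw [(hasDeriv_f hx.1 hx.2.le).deriv]
    exact deriv_nonneg_f hx.1 hx.2.le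

set_option maxHeartbeats 1600000 in
theorem csc_bound_and_varphi_bound :
    (∀ t ∈ Set.Ioc (0 : ℝ) Real.pi, 0 < 1 / Real.sin (t / 4) - 4 / t) ∧
      MonotoneOn (fun t : ℝ => 1 / Real.sin (t / 4) - 4 / t) (Set.Ioc (0 : ℝ) Real.pi) ∧
      ∀ t ∈ Set.Ioc (0 : ℝ) Real.pi,
        0 < gaussF (Real.sin (t / 4) ^ 2) / Real.sin (t / 4) - 4 / t ∧
        gaussF (Real.sin (t / 4) ^ 2) / Real.sin (t / 4) - 4 / t ≤
          Real.sqrt 2 * gaussF (1 / 2) - 4 / Real.pi := by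
  have pi_pos := Real.pi_pos
  have hpos : ∀ t ∈ Set.Ioc (0 : ℝ) Real.pi, 0 < 1 / Real.sin (t / 4) - 4 / t := by
    intro t ht
    obtain ⟨ht0, htpi⟩ := ht
    have hx : 0 < t / 4 := by linarith
    have hxpi : t / 4 < Real.pi := by linarith
    have hsin : 0 < Real.sin (t / 4) := Real.sin_pos_of_pos_of_lt_pi hx hxpi
    have hlt : Real.sin (t / 4) < t / 4 := Real.sin_lt hx
    rw [sub_pos, div_lt_div_iff₀ ht0 hsin]
    nlinarith
  refine ⟨hpos, mono_f, ?_⟩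
  intro t ht
  obtain ⟨ht0, htpi⟩ := ht
  have hx : 0 < t / 4 := by linarith
  have hxpi : t / 4 < Real.pi := by linarith
  have hsin : 0 < Real.sin (t / 4) := Real.sin_pos_of_pos_of_lt_pi hx hxpi
  set s := Real.sin (t / 4) with hsdef
  have hs0val : Real.sin (Real.pi / 4) = Real.sqrt 2 / 2 := Real.sin_pi_div_four
  have hsqrt2 : (0:ℝ) < Real.sqrt 2 := Real.sqrt_pos.2 (by norm_num)
  have hsqrt2sq : Real.sqrt 2 ^ 2 = 2 := Real.sq_sqrt (by norm_num)
  have hsqrt2lt : Real.sqrt 2 < 2 := by nlinarith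
  have hss0 : s ≤ Real.sqrt 2 / 2 := by
    rw [← hs0val, hsdef]
    apply Real.strictMonoOn_sin.monotoneOn ?_ ?_ (by linarith)
    · constructor <;> nlinarith
    · constructor <;> nlinarith
  have hs01 : Real.sqrt 2 / 2 < 1 := by nlinarith
  have hs0sq : (Real.sqrt 2 / 2) ^ 2 = 1 / 2 := by
    rw [div_pow, hsqrt2sq]; norm_num
  have hslt1 : s < 1 := lt_of_le_of_lt hss0 hs01
  have hssq1 : s ^ 2 < 1 := by nlinarith
  have hF1 : 1 ≤ gaussF (s ^ 2) := CscAux.gaussF_ge_one (by positivity) hssq1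
  have hp := hpos t ⟨ht0, htpi⟩
  have h2 : 1 / s ≤ gaussF (s ^ 2) / s := by
    gcongr
  constructor
  · linarith
  · have hup := CscAux.gauss_upper hsin hss0 hs01
    rw [hs0sq] at hup
    have hF12 : 1 ≤ gaussF (1 / 2 : ℝ) := CscAux.gaussF_ge_one (by norm_num) (by norm_num)
    have hmono := mono_f ⟨ht0, htpi⟩ ⟨pi_pos, le_refl _⟩ htpi
    simp only [hs0val] at hmono
    have hinv : 1 / (Real.sqrt 2 / 2) = Real.sqrt 2 := by
      rw [one_div_div, div_eq_iff hsqrt2.ne']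
      nlinarith
    have hmono' : 1 / s - 4 / t ≤ Real.sqrt 2 - 4 / Real.pi := by
      have : (1 : ℝ) / Real.sin (Real.pi / 4) = Real.sqrt 2 := by rw [hs0val, hinv]
      simpa [hsdef, this] using hmono
    have hkey : (gaussF (s ^ 2) - 1) / s ≤ (gaussF (1 / 2) - 1) * Real.sqrt 2 := by
      have h3 : (gaussF (s ^ 2) - 1) / s ≤ (s / (Real.sqrt 2 / 2) * (gaussF (1 / 2) - 1)) / s := by
        gcongr
        linarith
      have h4 : (s / (Real.sqrt 2 / 2) * (gaussF (1 / 2) - 1)) / s =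
          (gaussF (1 / 2) - 1) * (2 / Real.sqrt 2) := by
        field_simp
      have h5 : (2 : ℝ) / Real.sqrt 2 = Real.sqrt 2 := by
        rw [eq_comm, eq_div_iff hsqrt2.ne']
        exact Real.mul_self_sqrt (by norm_num : (0:ℝ) ≤ 2)
      rw [h4, h5] at h3
      exact h3
    have hsplit : gaussF (s ^ 2) / s = (gaussF (s ^ 2) - 1) / s + 1 / s := by
      rw [← add_div, sub_add_cancel]
    have hring : (gaussF (1 / 2) - 1) * Real.sqrt 2 + Real.sqrt 2 =
        Real.sqrt 2 * gaussF (1 / 2) := by ring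
    rw [hsplit]
    linarith
end

section
/- For all n \ge 0, with N = n+1, \pi G_n < \ln(16N) + \gamma, i.e. the zeroth truncation A_0(N) = \ln(16N) + \gamma is a strict upper bound for \pi G_n. -/
set_option maxHeartbeats 1000000

open Real Filter Finset Topology MeasureTheory intervalIntegral Set

noncomputable def landauG (n : ℕ) : ℝ :=
  ∑ k ∈ Finset.range (n + 1), ((Nat.choose (2 * k) k : ℝ) / 4 ^ k) ^ 2

noncomputable def lr (k : ℕ) : ℝ := ((2*k).choose k : ℝ) / 4^k

lemma lr_zero : lr 0 = 1 := by simp [lr]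

lemma lr_pos (k : ℕ) : 0 < lr k := by
  have := Nat.centralBinom_pos k
  unfold lr
  positivity

lemma lr_succ (k : ℕ) : lr (k+1) = lr k * ((2*k+1)/(2*k+2)) := by
  have h := Nat.succ_mul_centralBinom_succ k
  have h' : ((k:ℝ)+1) * ((2*(k+1)).choose (k+1) : ℝ) = 2*(2*k+1) * ((2*k).choose k : ℝ) := by
    have := congrArg (Nat.cast : ℕ → ℝ) h
    push_cast [Nat.centralBinom] at this ⊢
    convert this using 3 <;> ring
  unfold lr
  have hk : ((k:ℝ)+1) ≠ 0 := by positivity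
  field_simp
  push_cast
  linear_combination (2:ℝ) * 4^k * h'

lemma prod1 (n : ℕ) : ∏ i ∈ range n, ((2*(i:ℝ)+1)/(2*i+2)) = lr n := by
  induction n with
  | zero => simp [lr_zero]
  | succ k ih => rw [prod_range_succ, ih, lr_succ]; try push_cast; try ring

lemma prod2 (n : ℕ) : ∏ i ∈ range n, ((2*(i:ℝ)+2)/(2*i+3)) = 1/((2*n+1) * lr n) := by
  induction n with
  | zero => simp [lr_zero]
  | succ k ih =>
      rw [prod_range_succ, ih, lr_succ]
      have h1 : (0:ℝ) < 2*k+1 := by positivity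
      have h2 : (0:ℝ) < 2*k+2 := by positivity
      have h3 : (0:ℝ) < 2*k+3 := by positivity
      have := (lr_pos k).ne'
      push_cast
      field_simp
      try ring
      try tauto

lemma prod3 (n : ℕ) : ∏ i ∈ range n, ((2*(i:ℝ)+2)/(2*i+1)) = 1/ lr n := by
  induction n with
  | zero => simp [lr_zero]
  | succ k ih =>
      rw [prod_range_succ, ih, lr_succ]
      have h1 : (0:ℝ) < 2*k+1 := by positivity
      have h2 : (0:ℝ) < 2*k+2 := by positivity
      have := (lr_pos k).ne'
      push_cast
      field_simp
      try ring
      try tauto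

lemma lr_def (k : ℕ) : lr k = ((2*k).choose k : ℝ) / 4^k := rfl

lemma wallis_lr : Tendsto (fun n : ℕ => π * lr n ^ 2 * ((n:ℝ)+1/2)) atTop (𝓝 1) := by
  have h0 : Tendsto (fun k : ℕ => ∏ i ∈ range k,
      ((2:ℝ) * i + 2) / (2 * i + 1) * ((2 * i + 2) / (2 * i + 3))) atTop (𝓝 (π/2)) :=
    Real.tendsto_prod_pi_div_two
  have heq : ∀ k : ℕ, (∏ i ∈ range k, ((2:ℝ) * i + 2) / (2 * i + 1) * ((2 * i + 2) / (2 * i + 3)))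
      = 1/((2*k+1) * lr k ^ 2) := by
    intro k
    rw [prod_mul_distrib, prod3, prod2]
    have := (lr_pos k).ne'
    field_simp
  rw [funext heq] at h0
  have h1 : Tendsto (fun k : ℕ => (2*(k:ℝ)+1) * lr k ^ 2) atTop (𝓝 (2/π)) := by
    have h2 := h0.inv₀ (by positivity : (π/2 : ℝ) ≠ 0)
    have : ∀ k : ℕ, (1/((2*(k:ℝ)+1) * lr k ^ 2))⁻¹ = (2*(k:ℝ)+1) * lr k ^ 2 := by
      intro k
      have h3 : (0:ℝ) < 2*k+1 := by positivity
      have := (lr_pos k).ne'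
      field_simp
    rw [funext this] at h2
    rw [show (2/π : ℝ) = (π/2)⁻¹ by rw [inv_div]]
    exact h2
  have h4 : ∀ k : ℕ, π * lr k ^ 2 * ((k:ℝ)+1/2) = (π/2) * ((2*(k:ℝ)+1) * lr k ^ 2) := by
    intro k; ring
  rw [funext h4]
  have := h1.const_mul (π/2)
  convert this using 2
  field_simp

lemma tendsto_shift (c : ℝ) :
    Tendsto (fun k : ℕ => ((k:ℝ)+c)/((k:ℝ)+1/2)) atTop (𝓝 1) := by
  have h1 : Tendsto (fun k : ℕ => ((k:ℝ)+1/2)) atTop atTop :=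
    tendsto_atTop_add_const_right _ _ tendsto_natCast_atTop_atTop
  have h2 : Tendsto (fun k : ℕ => 1 + (c-1/2)/((k:ℝ)+1/2)) atTop (𝓝 (1+0)) :=
    tendsto_const_nhds.add (Tendsto.div_atTop tendsto_const_nhds h1)
  rw [add_zero] at h2
  refine h2.congr fun k => ?_
  have : ((k:ℝ)+1/2) ≠ 0 := by positivity
  field_simp
  ring

lemma tendsto_a (c : ℝ) : Tendsto (fun k : ℕ => π * lr k ^ 2 * ((k:ℝ)+c)) atTop (𝓝 1) := by
  have := wallis_lr.mul (tendsto_shift c)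
  rw [mul_one] at this
  refine this.congr fun k => ?_
  have : ((k:ℝ)+1/2) ≠ 0 := by positivity
  field_simp

lemma step13 (k : ℕ) :
    π * lr (k+1) ^ 2 * (((k:ℕ):ℝ)+1+1/3) ≤ π * lr k ^ 2 * ((k:ℝ)+1/3) := by
  rw [lr_succ]
  have hl := lr_pos k
  have hp := pi_pos
  have hk : (0:ℝ) ≤ (k:ℝ) := Nat.cast_nonneg k
  have h2 : (0:ℝ) < 2*(k:ℝ)+2 := by positivity
  rw [mul_pow, div_pow]
  rw [show π * (lr k ^2 * ((2*(k:ℝ)+1)^2/(2*(k:ℝ)+2)^2)) * ((k:ℝ)+1+1/3)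
      = (π * lr k ^2) * (((2*(k:ℝ)+1)^2 * ((k:ℝ)+4/3))/(2*(k:ℝ)+2)^2) by ring]
  rw [show π * lr k ^2 * ((k:ℝ)+1/3) = (π * lr k ^2) * ((k:ℝ)+1/3) by ring]
  have hpl : (0:ℝ) < π * lr k ^2 := by positivity
  refine mul_le_mul_of_nonneg_left ?_ hpl.le
  rw [div_le_iff₀ (by positivity)]
  nlinarith [hk]

lemma step13' (k : ℕ) (hk : 1 ≤ k) :
    π * lr (k+1) ^ 2 * (((k:ℕ):ℝ)+1+1/3) < π * lr k ^ 2 * ((k:ℝ)+1/3) := by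
  rw [lr_succ]
  have hl := lr_pos k
  have hp := pi_pos
  have hk' : (1:ℝ) ≤ (k:ℝ) := by exact_mod_cast hk
  have h2 : (0:ℝ) < 2*(k:ℝ)+2 := by positivity
  rw [mul_pow, div_pow]
  rw [show π * (lr k ^2 * ((2*(k:ℝ)+1)^2/(2*(k:ℝ)+2)^2)) * ((k:ℝ)+1+1/3)
      = (π * lr k ^2) * (((2*(k:ℝ)+1)^2 * ((k:ℝ)+4/3))/(2*(k:ℝ)+2)^2) by ring]
  rw [show π * lr k ^2 * ((k:ℝ)+1/3) = (π * lr k ^2) * ((k:ℝ)+1/3) by ring]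
  have hpl : (0:ℝ) < π * lr k ^2 := by positivity
  refine mul_lt_mul_of_pos_left ?_ hpl
  rw [div_lt_iff₀ (by positivity)]
  nlinarith [hk']

lemma anti13 : Antitone (fun k : ℕ => π * lr k ^ 2 * ((k:ℝ)+1/3)) := by
  refine antitone_nat_of_succ_le fun k => ?_
  have := step13 k
  push_cast at this ⊢
  linarith

lemma ge_one_13 (k : ℕ) : 1 ≤ π * lr k ^ 2 * ((k:ℝ)+1/3) :=
  anti13.le_of_tendsto (tendsto_a (1/3)) k

lemma gt_one_13 (k : ℕ) : 1 < π * lr k ^ 2 * ((k:ℝ)+1/3) := by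
  rcases Nat.eq_zero_or_pos k with h | h
  · subst h
    have : (3:ℝ) < π := pi_gt_three
    have h0 := lr_zero
    rw [h0]
    push_cast
    nlinarith
  · calc (1:ℝ) ≤ π * lr (k+1) ^ 2 * (((k:ℕ):ℝ)+1+1/3) := by
          have := ge_one_13 (k+1); push_cast at this ⊢; linarith
      _ < π * lr k ^ 2 * ((k:ℝ)+1/3) := step13' k h

lemma p_gt (k : ℕ) : 1/((k:ℝ)+1/3) < π * lr k ^ 2 := by
  have h := gt_one_13 k
  have h3 : (0:ℝ) < (k:ℝ)+1/3 := by positivity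
  rw [div_lt_iff₀ h3]
  linarith

lemma p_gt_half (k : ℕ) : 2/(2*(k:ℝ)+1) < π * lr k ^ 2 := by
  refine lt_trans ?_ (p_gt k)
  rw [div_lt_div_iff₀ (by positivity) (by positivity)]
  nlinarith [Nat.cast_nonneg (α := ℝ) k]

lemma step14 (k : ℕ) :
    π * lr k ^ 2 * ((k:ℝ)+1/4) < π * lr (k+1) ^ 2 * (((k:ℕ):ℝ)+1+1/4) := by
  rw [lr_succ]
  have hl := lr_pos k
  have hp := pi_pos
  have hk : (0:ℝ) ≤ (k:ℝ) := Nat.cast_nonneg k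
  have h2 : (0:ℝ) < 2*(k:ℝ)+2 := by positivity
  rw [mul_pow, div_pow]
  rw [show π * (lr k ^2 * ((2*(k:ℝ)+1)^2/(2*(k:ℝ)+2)^2)) * ((k:ℝ)+1+1/4)
      = (π * lr k ^2) * (((2*(k:ℝ)+1)^2 * ((k:ℝ)+5/4))/(2*(k:ℝ)+2)^2) by ring]
  rw [show π * lr k ^2 * ((k:ℝ)+1/4) = (π * lr k ^2) * ((k:ℝ)+1/4) by ring]
  have hpl : (0:ℝ) < π * lr k ^2 := by positivity
  refine mul_lt_mul_of_pos_left ?_ hpl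
  rw [lt_div_iff₀ (by positivity)]
  nlinarith [hk]

lemma mono14 : Monotone (fun k : ℕ => π * lr k ^ 2 * ((k:ℝ)+1/4)) := by
  refine monotone_nat_of_le_succ fun k => ?_
  have := step14 k
  push_cast at this ⊢
  linarith

lemma lt_one_14 (k : ℕ) : π * lr k ^ 2 * ((k:ℝ)+1/4) < 1 := by
  have h1 : π * lr (k+1) ^ 2 * (((k:ℕ):ℝ)+1+1/4) ≤ 1 := by
    have := mono14.ge_of_tendsto (tendsto_a (1/4)) (k+1)
    push_cast at this ⊢
    linarith
  exact lt_of_lt_of_le (step14 k) h1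

lemma p_lt (k : ℕ) : π * lr k ^ 2 < 1/((k:ℝ)+1/4) := by
  have h := lt_one_14 k
  have h3 : (0:ℝ) < (k:ℝ)+1/4 := by positivity
  rw [lt_div_iff₀ h3]
  linarith

lemma isinE (k : ℕ) : ∫ x in (0:ℝ)..π, sin x ^ (2*k) = π * lr k := by
  rw [integral_sin_pow_even, prod1]

lemma isinO (k : ℕ) : ∫ x in (0:ℝ)..π, sin x ^ (2*k+1) = 2 / ((2*(k:ℝ)+1) * lr k) := by
  rw [integral_sin_pow_odd, prod2]
  ring

lemma intg (k : ℕ) :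
    ∫ x in (0:ℝ)..π, lr k * sin x ^ (2*k) * (1 - sin x)
      = π * lr k ^ 2 - 2/(2*(k:ℝ)+1) := by
  have h1 : (fun x => lr k * sin x ^ (2*k) * (1 - sin x))
      = fun x => lr k * (sin x ^ (2*k)) - lr k * (sin x ^ (2*k+1)) := by
    funext x; ring
  rw [h1]
  rw [integral_sub ((show Continuous (fun x => lr k * sin x ^ (2*k)) from continuous_const.mul (continuous_sin.pow _)).intervalIntegrable _ _)
      ((show Continuous (fun x => lr k * sin x ^ (2*k+1)) from continuous_const.mul (continuous_sin.pow _)).intervalIntegrable _ _)]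
  rw [intervalIntegral.integral_const_mul, intervalIntegral.integral_const_mul, isinE, isinO]
  have h2 : (0:ℝ) < 2*(k:ℝ)+1 := by positivity
  have h3 := (lr_pos k).ne'
  field_simp

lemma denom_pos {a : ℝ} (h1 : a < 1) (h0 : 0 ≤ a) (x : ℝ) : 0 < 1 - a * sin x ^2 := by
  have hs : sin x ^2 ≤ 1 := sin_sq_le_one x
  nlinarith [sq_nonneg (sin x)]

lemma trig_cont {a : ℝ} (h0 : 0 ≤ a) (h1 : a < 1) :
    Continuous (fun x : ℝ => 1/(1 - a * sin x ^2)) := by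
  refine continuous_const.div (by continuity) fun x => ?_
  exact (denom_pos h1 h0 x).ne'

lemma trig_half (a : ℝ) (h0 : 0 ≤ a) (h1 : a < 1) :
    ∫ x in (0:ℝ)..(π/2), 1/(1 - a * sin x ^2) = (π/2) / sqrt (1-a) := by
  set b := sqrt (1-a) with hbdef
  have hbpos : 0 < b := sqrt_pos.2 (by linarith)
  have hb2 : b^2 = 1-a := sq_sqrt (by linarith)
  -- the primitive on [0, c] for c < π/2
  have hFc : ∀ c ∈ Ico (0:ℝ) (π/2), ∫ x in (0:ℝ)..c, 1/(1-a*sin x^2)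
      = (1/b) * arctan (b * tan c) := by
    intro c hc
    have hder : ∀ x ∈ uIcc (0:ℝ) c, HasDerivAt (fun t => (1/b) * arctan (b * tan t))
        (1/(1-a*sin x^2)) x := by
      intro x hx
      rw [uIcc_of_le hc.1] at hx
      have hcos : 0 < cos x := by
        apply cos_pos_of_mem_Ioo
        constructor
        · linarith [hx.1, pi_pos]
        · exact lt_of_le_of_lt hx.2 hc.2
      have htan : HasDerivAt (fun t => b * tan t) (b * (1/cos x^2)) x :=
        (hasDerivAt_tan hcos.ne').const_mul b
      have harc : HasDerivAt (fun t => arctan (b * tan t))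
          ((1/(1+(b*tan x)^2)) * (b * (1/cos x^2))) x :=
        htan.arctan
      have := harc.const_mul (1/b)
      refine this.congr_deriv ?_
      symm
      rw [tan_eq_sin_div_cos]
      have hc2 : cos x ^ 2 ≠ 0 := by positivity
      have hden := (denom_pos h1 h0 x).ne'
      have hcos2 : cos x ^2 = 1 - sin x ^2 := cos_sq' x
      field_simp
      linear_combination sin x^2 * hb2 + hcos2
    rw [integral_eq_sub_of_hasDerivAt hder
      (((trig_cont h0 h1)).intervalIntegrable _ _)]
    simp [tan_zero]
  -- continuity of the primitive
  have hG : Continuous (fun c : ℝ => ∫ x in (0:ℝ)..c, 1/(1-a*sin x^2)) :=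
    intervalIntegral.continuous_primitive
      (fun a' b' => (trig_cont h0 h1).intervalIntegrable a' b') 0
  have hGt : Tendsto (fun c => ∫ x in (0:ℝ)..c, 1/(1-a*sin x^2)) (𝓝[<] (π/2))
      (𝓝 (∫ x in (0:ℝ)..(π/2), 1/(1-a*sin x^2))) :=
    (hG.tendsto (π/2)).mono_left nhdsWithin_le_nhds
  have hFt : Tendsto (fun c => (1/b) * arctan (b * tan c)) (𝓝[<] (π/2))
      (𝓝 ((1/b) * (π/2))) := by
    have h1' : Tendsto (fun c => b * tan c) (𝓝[<] (π/2)) atTop :=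
      (tendsto_tan_pi_div_two).const_mul_atTop hbpos
    have h2' : Tendsto (fun c => arctan (b * tan c)) (𝓝[<] (π/2)) (𝓝 (π/2)) :=
      (Real.tendsto_arctan_atTop.mono_right nhdsWithin_le_nhds).comp h1'
    exact h2'.const_mul (1/b)
  have heq : (fun c => ∫ x in (0:ℝ)..c, 1/(1-a*sin x^2))
      =ᶠ[𝓝[<] (π/2)] (fun c => (1/b) * arctan (b * tan c)) := by
    filter_upwards [Ioo_mem_nhdsLT_of_mem
      (show (π/2:ℝ) ∈ Ioc 0 (π/2) from ⟨by positivity, le_refl _⟩)] with c hc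
    exact hFc c ⟨hc.1.le, hc.2⟩
  have := tendsto_nhds_unique (hGt.congr' heq) hFt
  rw [this]
  ring

lemma trig_full (a : ℝ) (h0 : 0 ≤ a) (h1 : a < 1) :
    ∫ x in (0:ℝ)..π, 1/(1 - a * sin x ^2) = π / sqrt (1-a) := by
  have hint : ∀ c d : ℝ, IntervalIntegrable (fun x => 1/(1 - a * sin x ^2)) volume c d :=
    fun c d => (trig_cont h0 h1).intervalIntegrable c d
  have hrefl : ∫ x in (π/2:ℝ)..π, 1/(1 - a * sin x ^2)
      = ∫ x in (0:ℝ)..(π/2), 1/(1 - a * sin x ^2) := by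
    have h := intervalIntegral.integral_comp_sub_left (a := 0) (b := π/2)
      (fun x => 1/(1 - a * sin x ^2)) π
    simp only [Real.sin_pi_sub] at h
    have h2 : π - π/2 = π/2 := by ring
    have h3 : π - 0 = π := by ring
    rw [h2, h3] at h
    exact h.symm
  have := integral_add_adjacent_intervals (hint 0 (π/2)) (hint (π/2) π)
  rw [← this, hrefl, trig_half a h0 h1]
  ring

lemma genfun {y : ℝ} (h0 : 0 ≤ y) (h1 : y < 1) :
    HasSum (fun k => lr k * y^k) (1/sqrt (1-y)) := by
  rw [hasSum_iff_tendsto_nat_of_nonneg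
    (fun k => by have := (lr_pos k).le; positivity)]
  have hden : ∀ x : ℝ, 0 < 1 - y * sin x ^2 := denom_pos h1 h0
  have hcontN : ∀ N : ℕ, Continuous fun x : ℝ => (y * sin x^2)^N / (1 - y*sin x ^2) := by
    intro N
    exact (((continuous_const.mul (continuous_sin.pow 2)).pow N).div
      (continuous_const.sub (continuous_const.mul (continuous_sin.pow 2)))
      (fun x => (hden x).ne'))
  have hE : ∀ N : ℕ, ∑ k ∈ range N, lr k * y^k
      = 1 / sqrt (1-y) - (1/π) * ∫ x in (0:ℝ)..π, (y * sin x^2)^N / (1 - y*sin x^2) := by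
    intro N
    have hterm : ∀ k ∈ range N, lr k * y^k = (1/π) * ∫ x in (0:ℝ)..π, (y*sin x^2)^k := by
      intro k _
      have hfe : (fun x :ℝ => (y*sin x^2)^k) = fun x => y^k * sin x ^ (2*k) := by
        funext x; rw [mul_pow, pow_mul]
      rw [hfe, intervalIntegral.integral_const_mul, isinE]
      have := pi_pos.ne'
      field_simp
    rw [Finset.sum_congr rfl hterm, ← Finset.mul_sum,
      ← intervalIntegral.integral_finset_sum
        (fun k _ => (show Continuous (fun x => (y*sin x^2)^k) from (continuous_const.mul (continuous_sin.pow 2)).pow k).intervalIntegrable _ _)]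
    have hgeom : Set.EqOn (fun x : ℝ => ∑ k ∈ range N, (y*sin x^2)^k)
        (fun x : ℝ => 1/(1 - y*sin x^2) - (y*sin x^2)^N / (1 - y*sin x^2)) (Set.uIcc 0 π) := by
      intro x _
      have hne : (y*sin x^2) ≠ 1 := by nlinarith [hden x]
      simp only
      rw [geom_sum_eq hne, div_sub_div_same, div_eq_div_iff (sub_ne_zero.2 hne) (hden x).ne']
      ring
    rw [intervalIntegral.integral_congr hgeom,
      intervalIntegral.integral_sub ((trig_cont h0 h1).intervalIntegrable _ _)
        ((hcontN N).intervalIntegrable _ _), trig_full y h0 h1]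
    have hpi := pi_pos.ne'
    rw [mul_sub]
    congr 1
    field_simp
  rw [funext hE]
  have htz : Tendsto (fun N : ℕ => (1/π) * ∫ x in (0:ℝ)..π, (y * sin x^2)^N / (1 - y*sin x^2))
      atTop (𝓝 0) := by
    have hub : ∀ N : ℕ, (1/π) * ∫ x in (0:ℝ)..π, (y * sin x^2)^N / (1 - y*sin x^2)
        ≤ y^N * (1/(1-y)) := by
      intro N
      have hmono : (∫ x in (0:ℝ)..π, (y * sin x^2)^N / (1 - y*sin x^2))
          ≤ ∫ _x in (0:ℝ)..π, y^N * (1/(1-y)) := by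
        refine intervalIntegral.integral_mono_on pi_pos.le
          ((hcontN N).intervalIntegrable _ _)
          (intervalIntegrable_const) ?_
        intro x _
        have h2 : (0:ℝ) ≤ y * sin x^2 := by positivity
        have h3 : y * sin x^2 ≤ y := by nlinarith [sin_sq_le_one x]
        have h4 : (y * sin x^2)^N ≤ y^N := pow_le_pow_left₀ h2 h3 N
        have h5 : 1 - y ≤ 1 - y*sin x^2 := by linarith
        have h6 : (0:ℝ) < 1 - y := by linarith
        rw [div_le_iff₀ (hden x)]
        calc (y * sin x^2)^N ≤ y^N := h4
          _ = (y^N * (1/(1-y))) * (1-y) := by field_simp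
          _ ≤ (y^N * (1/(1-y))) * (1 - y*sin x^2) := by
              refine mul_le_mul_of_nonneg_left h5 (by positivity)
      rw [intervalIntegral.integral_const] at hmono
      have hπ : (0:ℝ) < π := pi_pos
      rw [smul_eq_mul] at hmono
      calc (1/π) * ∫ x in (0:ℝ)..π, (y * sin x^2)^N / (1 - y*sin x^2)
          ≤ (1/π) * ((π - 0) * (y^N * (1/(1-y)))) := by
            refine mul_le_mul_of_nonneg_left hmono (by positivity)
        _ = y^N * (1/(1-y)) := by rw [sub_zero]; field_simp
    have hlb : ∀ N : ℕ, 0 ≤ (1/π) * ∫ x in (0:ℝ)..π, (y * sin x^2)^N / (1 - y*sin x^2) := by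
      intro N
      have : 0 ≤ ∫ x in (0:ℝ)..π, (y * sin x^2)^N / (1 - y*sin x^2) := by
        refine intervalIntegral.integral_nonneg pi_pos.le ?_
        intro x _
        have := hden x
        positivity
      positivity
    have hgeo : Tendsto (fun N : ℕ => y^N * (1/(1-y))) atTop (𝓝 0) := by
      have := (tendsto_pow_atTop_nhds_zero_of_lt_one h0 h1).mul_const (1/(1-y))
      simpa using this
    exact squeeze_zero hlb hub hgeo
  have := (tendsto_const_nhds (x := 1/sqrt (1-y)) (f := atTop (α := ℕ))).sub htz
  simpa using this

lemma logint_h1 : ∫ x in (0:ℝ)..(π/2), |cos x|/(1+sin x) = log 2 := by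
  have hEq : Set.EqOn (fun x : ℝ => |cos x|/(1+sin x)) (fun x => cos x/(1+sin x))
      (Set.uIcc 0 (π/2)) := by
    intro x hx
    rw [uIcc_of_le (by positivity : (0:ℝ) ≤ π/2)] at hx
    have : 0 ≤ cos x := cos_nonneg_of_mem_Icc ⟨by linarith [hx.1, pi_pos], hx.2⟩
    simp only [abs_of_nonneg this]
  rw [intervalIntegral.integral_congr hEq]
  have hder : ∀ x ∈ Set.uIcc (0:ℝ) (π/2), HasDerivAt (fun t => log (1+sin t))
      (cos x/(1+sin x)) x := by
    intro x hx
    rw [uIcc_of_le (by positivity : (0:ℝ) ≤ π/2)] at hx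
    have hs : 0 ≤ sin x := sin_nonneg_of_nonneg_of_le_pi hx.1 (by linarith [hx.2, pi_pos])
    have h1 : (1:ℝ) + sin x ≠ 0 := by positivity
    have := ((hasDerivAt_sin x).const_add 1).log h1
    simpa using this
  have hcont : ContinuousOn (fun x : ℝ => cos x/(1+sin x)) (Set.uIcc 0 (π/2)) := by
    refine continuous_cos.continuousOn.div
      (continuous_const.add continuous_sin).continuousOn fun x hx => ?_
    rw [uIcc_of_le (by positivity : (0:ℝ) ≤ π/2)] at hx
    have hs : 0 ≤ sin x := sin_nonneg_of_nonneg_of_le_pi hx.1 (by linarith [hx.2, pi_pos])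
    positivity
  rw [integral_eq_sub_of_hasDerivAt hder (hcont.intervalIntegrable)]
  simp [Real.sin_pi_div_two]
  norm_num

lemma logint_h2 : ∫ x in (π/2:ℝ)..π, |cos x|/(1+sin x) = log 2 := by
  have hEq : Set.EqOn (fun x : ℝ => |cos x|/(1+sin x)) (fun x => -cos x/(1+sin x))
      (Set.uIcc (π/2) π) := by
    intro x hx
    rw [uIcc_of_le (by linarith [pi_pos] : (π/2:ℝ) ≤ π)] at hx
    have : cos x ≤ 0 := cos_nonpos_of_pi_div_two_le_of_le hx.1 (by linarith [hx.2, pi_pos])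
    simp only [abs_of_nonpos this]
  rw [intervalIntegral.integral_congr hEq]
  have hder : ∀ x ∈ Set.uIcc (π/2:ℝ) π, HasDerivAt (fun t => -log (1+sin t))
      (-cos x/(1+sin x)) x := by
    intro x hx
    rw [uIcc_of_le (by linarith [pi_pos] : (π/2:ℝ) ≤ π)] at hx
    have hs : 0 ≤ sin x := sin_nonneg_of_nonneg_of_le_pi (by linarith [hx.1, pi_pos]) hx.2
    have h1 : (1:ℝ) + sin x ≠ 0 := by positivity
    have := (((hasDerivAt_sin x).const_add 1).log h1).neg
    exact this.congr_deriv (neg_div _ _).symm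
  have hcont : ContinuousOn (fun x : ℝ => -cos x/(1+sin x)) (Set.uIcc (π/2) π) := by
    refine continuous_cos.neg.continuousOn.div
      (continuous_const.add continuous_sin).continuousOn fun x hx => ?_
    rw [uIcc_of_le (by linarith [pi_pos] : (π/2:ℝ) ≤ π)] at hx
    have hs : 0 ≤ sin x := sin_nonneg_of_nonneg_of_le_pi (by linarith [hx.1, pi_pos]) hx.2
    positivity
  rw [integral_eq_sub_of_hasDerivAt hder (hcont.intervalIntegrable)]
  simp [Real.sin_pi_div_two, Real.sin_pi]
  norm_num

lemma Fcont : ContinuousOn (fun x : ℝ => |cos x|/(1+sin x)) (Set.Icc 0 π) := by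
  refine continuous_cos.abs.continuousOn.div
    (continuous_const.add continuous_sin).continuousOn fun x hx => ?_
  have hs : 0 ≤ sin x := sin_nonneg_of_nonneg_of_le_pi hx.1 hx.2
  positivity

lemma logint : ∫ x in (0:ℝ)..π, |cos x|/(1+sin x) = 2 * log 2 := by
  have hi1 : IntervalIntegrable (fun x : ℝ => |cos x|/(1+sin x)) volume 0 (π/2) :=
    (Fcont.mono (by
      rw [uIcc_of_le (by positivity : (0:ℝ) ≤ π/2)]
      exact Icc_subset_Icc (le_refl _) (by linarith [pi_pos]))).intervalIntegrable
  have hi2 : IntervalIntegrable (fun x : ℝ => |cos x|/(1+sin x)) volume (π/2) π :=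
    (Fcont.mono (by
      rw [uIcc_of_le (by linarith [pi_pos] : (π/2:ℝ) ≤ π)]
      exact Icc_subset_Icc (by linarith [pi_pos]) (le_refl _))).intervalIntegrable
  rw [← integral_add_adjacent_intervals hi1 hi2, logint_h1, logint_h2]
  ring

lemma sin_lt_one_aux {t : ℝ} (h0 : 0 ≤ t) (h2 : t ≤ π) (hne : t ≠ π/2) : sin t < 1 := by
  rcases lt_or_gt_of_ne hne with h | h
  · have := Real.strictMonoOn_sin (a := t) (b := π/2)
      ⟨by linarith [pi_pos], h.le⟩ ⟨by linarith [pi_pos], le_refl _⟩ h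
    rwa [Real.sin_pi_div_two] at this
  · have h3 : π - t < π/2 := by linarith
    have := Real.strictMonoOn_sin (a := π - t) (b := π/2)
      ⟨by linarith [pi_pos], h3.le⟩ ⟨by linarith [pi_pos], le_refl _⟩ h3
    rw [Real.sin_pi_div_two, Real.sin_pi_sub] at this
    exact this

lemma hasSum_main : HasSum (fun k : ℕ => π * lr k ^ 2 - 2/(2*(k:ℝ)+1)) (2 * log 2) := by
  rw [hasSum_iff_tendsto_nat_of_nonneg (fun k => by have := p_gt_half k; linarith)]
  set μ : Measure ℝ := volume.restrict (Set.Ioc (0:ℝ) π) with hμ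
  set F : ℝ → ℝ := fun t => |cos t|/(1+sin t) with hF
  set f : ℕ → ℝ → ℝ := fun N t => (1 - sin t) * ∑ k ∈ range N, lr k * (sin t ^ 2)^k with hf
  have hfcont : ∀ N, Continuous (f N) := by
    intro N
    exact (continuous_const.sub continuous_sin).mul
      (continuous_finset_sum _ fun k _ => continuous_const.mul ((continuous_sin.pow 2).pow k))
  have hfint : ∀ N, Integrable (f N) μ := fun N => (hfcont N).integrableOn_Ioc
  have hFint : Integrable F μ := Fcont.integrableOn_Icc.mono_set Ioc_subset_Icc_self
  have h1 : ∀ᵐ t ∂μ, t ∈ Set.Ioc (0:ℝ) π := ae_restrict_mem measurableSet_Ioc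
  have h2 : ∀ᵐ t ∂μ, t ≠ π/2 := by
    rw [ae_iff]
    have hset : {t : ℝ | ¬ t ≠ π/2} = {(π/2 : ℝ)} := by ext t; simp
    rw [hset, hμ, Measure.restrict_apply (measurableSet_singleton _)]
    exact le_antisymm (le_trans (measure_mono inter_subset_left)
      volume_singleton.le) zero_le
  have h_mono : ∀ᵐ t ∂μ, Monotone fun N => f N t := by
    filter_upwards [h1] with t ht
    have hs0 : 0 ≤ sin t := sin_nonneg_of_nonneg_of_le_pi ht.1.le ht.2
    have hs1 : sin t ≤ 1 := sin_le_one t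
    intro M N hMN
    refine mul_le_mul_of_nonneg_left ?_ (by linarith)
    refine Finset.sum_le_sum_of_subset_of_nonneg (Finset.range_subset_range.mpr hMN)
      fun k _ _ => ?_
    have := (lr_pos k).le
    positivity
  have h_tendsto : ∀ᵐ t ∂μ, Tendsto (fun N => f N t) atTop (𝓝 (F t)) := by
    filter_upwards [h1, h2] with t ht htne
    have hs0 : 0 ≤ sin t := sin_nonneg_of_nonneg_of_le_pi ht.1.le ht.2
    have hs1 : sin t < 1 := sin_lt_one_aux ht.1.le ht.2 htne
    have hy0 : (0:ℝ) ≤ sin t^2 := sq_nonneg _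
    have hy1 : sin t^2 < 1 := by nlinarith
    have hgs := ((genfun hy0 hy1).tendsto_sum_nat).const_mul (1 - sin t)
    have hval : (1 - sin t) * (1/sqrt (1 - sin t^2)) = F t := by
      have hsq : sqrt (1 - sin t^2) = |cos t| := by
        rw [← cos_sq', sqrt_sq_eq_abs]
      have hcpos : 0 < |cos t| := by
        rw [← hsq]
        refine sqrt_pos.2 ?_
        nlinarith
      rw [hsq, hF]
      simp only
      rw [mul_one_div, div_eq_div_iff hcpos.ne' (by positivity : (1:ℝ) + sin t ≠ 0)]
      rw [abs_mul_abs_self]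
      nlinarith [cos_sq' t]
    rw [← hval]
    exact hgs
  have hMCT := integral_tendsto_of_tendsto_of_monotone hfint hFint h_mono h_tendsto
  have hfN : ∀ N, ∫ t, f N t ∂μ = ∑ k ∈ range N, (π * lr k ^ 2 - 2/(2*(k:ℝ)+1)) := by
    intro N
    have hio : ∫ t, f N t ∂μ = ∫ x in (0:ℝ)..π, f N x := (integral_of_le pi_pos.le).symm
    rw [hio]
    have heq : Set.EqOn (f N)
        (fun x => ∑ k ∈ range N, lr k * sin x ^(2*k) * (1 - sin x)) (Set.uIcc 0 π) := by
      intro x _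
      simp only [hf]
      rw [mul_comm, Finset.sum_mul]
      refine Finset.sum_congr rfl fun k _ => ?_
      rw [pow_mul]
    rw [intervalIntegral.integral_congr heq,
      intervalIntegral.integral_finset_sum (fun k _ =>
        (show Continuous (fun x => lr k * sin x ^ (2*k) * (1 - sin x)) from (continuous_const.mul (continuous_sin.pow _)).mul
          (continuous_const.sub continuous_sin)).intervalIntegrable _ _)]
    exact Finset.sum_congr rfl fun k _ => intg k
  have hFv : ∫ t, F t ∂μ = 2 * log 2 := by
    have hio : ∫ t, F t ∂μ = ∫ x in (0:ℝ)..π, F x := (integral_of_le pi_pos.le).symm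
    rw [hio, hF]
    exact logint
  rw [funext hfN, hFv] at hMCT
  exact hMCT

lemma log_lower {x : ℝ} (h0 : 0 < x) (h1 : x < 1) :
    2*x < log (1+x) - log (1-x) := by
  set f : ℝ → ℝ := fun t => log (1+t) - log (1-t) - 2*t with hf
  have hder : ∀ t ∈ Ioo (0:ℝ) x, HasDerivAt f (1/(1+t) - (-1)/(1-t) - 2) t := by
    intro t ht
    have h1t : (0:ℝ) < 1 + t := by nlinarith [ht.1]
    have h2t : (0:ℝ) < 1 - t := by nlinarith [ht.2]
    have d1 : HasDerivAt (fun t : ℝ => log (1+t)) (1/(1+t)) t := by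
      simpa using (((hasDerivAt_id t).const_add 1).log h1t.ne')
    have d2 : HasDerivAt (fun t : ℝ => log (1-t)) ((-1)/(1-t)) t := by
      simpa using (((hasDerivAt_id t).const_sub 1).log h2t.ne')
    have d3 : HasDerivAt (fun t : ℝ => 2*t) 2 t := by
      simpa using (hasDerivAt_id t).const_mul 2
    exact (d1.sub d2).sub d3
  have hcont : ContinuousOn f (Icc 0 x) := by
    refine ContinuousOn.sub (ContinuousOn.sub ?_ ?_) (by fun_prop)
    · refine (continuousOn_const.add continuousOn_id).log fun t ht => ?_
      have := ht.1; exact (show (0:ℝ) < 1 + t by linarith).ne'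
    · refine (continuousOn_const.sub continuousOn_id).log fun t ht => ?_
      have h2 := ht.2
      simp only [Pi.sub_apply, id]
      nlinarith
  have hmono : StrictMonoOn f (Icc 0 x) := by
    refine strictMonoOn_of_deriv_pos (convex_Icc 0 x) hcont fun t ht => ?_
    rw [interior_Icc] at ht
    rw [(hder t ht).deriv]
    have h1t : (0:ℝ) < 1 + t := by nlinarith [ht.1]
    have h2t : (0:ℝ) < 1 - t := by nlinarith [ht.2]
    have key : 1/(1+t) - (-1)/(1-t) - 2 = 2*t^2/((1+t)*(1-t)) := by
      field_simp
      ring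
    rw [key]
    have := ht.1
    positivity
  have := hmono (left_mem_Icc.2 h0.le) (right_mem_Icc.2 h0.le) h0
  simp only [hf] at this
  norm_num at this
  linarith

lemma log_upper {x : ℝ} (h0 : 0 < x) (h1 : x ≤ 1/2) :
    log (1+x) - log (1-x) ≤ 2*x + x^3 := by
  set f : ℝ → ℝ := fun t => 2*t + t^3 - (log (1+t) - log (1-t)) with hf
  have hder : ∀ t ∈ Ioo (0:ℝ) x, HasDerivAt f (2 + 3*t^2 - (1/(1+t) - (-1)/(1-t))) t := by
    intro t ht
    have h1t : (0:ℝ) < 1 + t := by nlinarith [ht.1]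
    have h2t : (0:ℝ) < 1 - t := by nlinarith [ht.2, h1]
    have d1 : HasDerivAt (fun t : ℝ => log (1+t)) (1/(1+t)) t := by
      simpa using (((hasDerivAt_id t).const_add 1).log h1t.ne')
    have d2 : HasDerivAt (fun t : ℝ => log (1-t)) ((-1)/(1-t)) t := by
      simpa using (((hasDerivAt_id t).const_sub 1).log h2t.ne')
    have d3 : HasDerivAt (fun t : ℝ => 2*t + t^3) (2 + 3*t^2) t := by
      have := ((hasDerivAt_id t).const_mul 2).add (hasDerivAt_pow 3 t)
      exact this.congr_deriv (by norm_num)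
    exact d3.sub (d1.sub d2)
  have hcont : ContinuousOn f (Icc 0 x) := by
    refine ContinuousOn.sub (by fun_prop) (ContinuousOn.sub ?_ ?_)
    · refine (continuousOn_const.add continuousOn_id).log fun t ht => ?_
      have := ht.1; exact (show (0:ℝ) < 1 + t by linarith).ne'
    · refine (continuousOn_const.sub continuousOn_id).log fun t ht => ?_
      have h2 := ht.2
      simp only [Pi.sub_apply, id]
      nlinarith
  have hmono : MonotoneOn f (Icc 0 x) := by
    refine monotoneOn_of_deriv_nonneg (convex_Icc 0 x) hcont
      (fun t ht => by
        rw [interior_Icc] at ht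
        exact ((hder t ht).differentiableAt).differentiableWithinAt)
      fun t ht => ?_
    rw [interior_Icc] at ht
    rw [(hder t ht).deriv]
    have h1t : (0:ℝ) < 1 + t := by nlinarith [ht.1]
    have h2t : (0:ℝ) < 1 - t := by nlinarith [ht.2, h1]
    have key : 2 + 3*t^2 - (1/(1+t) - (-1)/(1-t)) = t^2*(1-3*t^2)/((1+t)*(1-t)) := by
      field_simp
      ring
    rw [key]
    have ht1 := ht.1
    have ht2 : t ≤ 1/2 := le_trans ht.2.le h1
    have : 0 ≤ 1 - 3*t^2 := by nlinarith
    positivity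
  have := hmono (left_mem_Icc.2 h0.le) (right_mem_Icc.2 h0.le) h0.le
  simp only [hf] at this
  norm_num at this
  linarith

lemma rec_lt {n : ℝ} (hn : 1 ≤ n) : 1/n < log (2*n+1) - log (2*n-1) := by
  have hn0 : (0:ℝ) < n := by linarith
  have hx0 : (0:ℝ) < 1/(2*n) := by positivity
  have hx1 : 1/(2*n) < 1 := by rw [div_lt_one (by positivity)]; linarith
  have h := log_lower hx0 hx1
  have e1 : 1 + 1/(2*n) = (2*n+1)/(2*n) := by field_simp
  have e2 : 1 - 1/(2*n) = (2*n-1)/(2*n) := by field_simp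
  have hne : (2*n-1) ≠ 0 := by nlinarith
  have l1 : log (1 + 1/(2*n)) = log (2*n+1) - log (2*n) := by
    rw [e1]; exact log_div (by positivity) (by positivity)
  have l2 : log (1 - 1/(2*n)) = log (2*n-1) - log (2*n) := by
    rw [e2]; exact log_div hne (by positivity)
  have e4 : 2*(1/(2*n)) = 1/n := by field_simp
  rw [l1, l2, e4] at h
  linarith

lemma rec_ub {n : ℝ} (hn : 1 ≤ n) :
    log (2*n+1) - log (2*n-1) ≤ 1/n + 1/(8*n^3) := by
  have hn0 : (0:ℝ) < n := by linarith
  have hx0 : (0:ℝ) < 1/(2*n) := by positivity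
  have hx1 : 1/(2*n) ≤ 1/2 := by
    rw [div_le_div_iff₀ (by positivity) (by norm_num)]
    linarith
  have h := log_upper hx0 hx1
  have e1 : 1 + 1/(2*n) = (2*n+1)/(2*n) := by field_simp
  have e2 : 1 - 1/(2*n) = (2*n-1)/(2*n) := by field_simp
  have hne : (2*n-1) ≠ 0 := by nlinarith
  have l1 : log (1 + 1/(2*n)) = log (2*n+1) - log (2*n) := by
    rw [e1]; exact log_div (by positivity) (by positivity)
  have l2 : log (1 - 1/(2*n)) = log (2*n-1) - log (2*n) := by
    rw [e2]; exact log_div hne (by positivity)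
  have e3 : 2*(1/(2*n)) + (1/(2*n))^3 = 1/n + 1/(8*n^3) := by
    field_simp
    ring
  rw [l1, l2] at h
  linarith

noncomputable def HH (m : ℕ) : ℝ := ∑ i ∈ range m, 1/((i:ℝ)+1)

lemma hHH (m : ℕ) : ((harmonic m : ℚ) : ℝ) = HH m := by
  rw [harmonic, HH]
  push_cast
  refine Finset.sum_congr rfl fun i _ => ?_
  rw [one_div]

lemma hodd (m : ℕ) : ∑ k ∈ range m, 2/(2*(k:ℝ)+1) = 2 * HH (2*m) - HH m := by
  induction m with
  | zero => simp [HH]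
  | succ m ih =>
      rw [sum_range_succ, ih]
      have e1 : HH (2*(m+1)) = HH (2*m) + 1/(2*(m:ℝ)+1) + 1/(2*(m:ℝ)+2) := by
        have h2 : 2*(m+1) = (2*m)+1+1 := by ring
        rw [h2, HH, sum_range_succ, sum_range_succ, ← HH]
        push_cast
        ring
      have e2 : HH (m+1) = HH m + 1/((m:ℝ)+1) := by
        rw [HH, sum_range_succ, ← HH]
      rw [e1, e2]
      field_simp
      ring

lemma hup : ∀ a b : ℕ, a ≤ b → HH b - HH a ≤ log (2*(b:ℝ)+1) - log (2*(a:ℝ)+1) := by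
  intro a b hab
  induction b, hab using Nat.le_induction with
  | base => simp
  | succ b hab ih =>
      rw [HH, sum_range_succ, ← HH]
      have hr := rec_lt (n := (b:ℝ)+1) (by linarith [Nat.cast_nonneg (α := ℝ) b])
      have e2 : 2*((b:ℝ)+1)-1 = 2*((b:ℕ):ℝ)+1 := by ring
      rw [e2] at hr
      push_cast
      push_cast at ih
      linarith

lemma hlow : ∀ a b : ℕ, 1 ≤ a → a ≤ b →
    log (2*(b:ℝ)+1) - log (2*(a:ℝ)+1)
      - (1/8)*(1/(2*(a:ℝ)*((a:ℝ)+1)) - 1/(2*(b:ℝ)*((b:ℝ)+1))) ≤ HH b - HH a := by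
  intro a b ha hab
  induction b, hab using Nat.le_induction with
  | base => simp
  | succ b hab ih =>
      rw [HH, sum_range_succ, ← HH]
      have hb1 : (1:ℝ) ≤ (b:ℝ) := by exact_mod_cast le_trans ha hab
      have hr := rec_ub (n := (b:ℝ)+1) (by linarith)
      have e2 : 2*((b:ℝ)+1)-1 = 2*((b:ℕ):ℝ)+1 := by ring
      rw [e2] at hr
      have hcube : 1/(8*((b:ℝ)+1)^3) ≤ (1/8)*(1/(2*(b:ℝ)*((b:ℝ)+1)) - 1/(2*((b:ℝ)+1)*((b:ℝ)+2))) := by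
        have key : (1/8)*(1/(2*(b:ℝ)*((b:ℝ)+1)) - 1/(2*((b:ℝ)+1)*((b:ℝ)+2)))
            = 1/(8*((b:ℝ)*((b:ℝ)+1)*((b:ℝ)+2))) := by
          field_simp
          ring
        rw [key]
        rw [div_le_div_iff₀ (by positivity) (by positivity)]
        nlinarith
      have e3 : 1/(2*((b:ℝ)+1)*((b:ℝ)+1+1)) = 1/(2*((b:ℝ)+1)*((b:ℝ)+2)) := by ring_nf
      push_cast
      push_cast at ih
      linarith

lemma gam_lb (m : ℕ) (hm : 1 ≤ m) :
    HH (2*m) - log (4*(m:ℝ)+1) + log 2 - (1/8)*(1/(2*(2*(m:ℝ))*(2*(m:ℝ)+1)))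
      ≤ Real.eulerMascheroniConstant := by
  have hmr : (1:ℝ) ≤ (m:ℝ) := by exact_mod_cast hm
  set Δ : ℝ := (1/8)*(1/(2*(2*(m:ℝ))*(2*(m:ℝ)+1))) with hΔ
  have hEv : ∀ᶠ K : ℕ in atTop, HH (2*m) - log (4*(m:ℝ)+1) - Δ
      + (log (2*(K:ℝ)+1) - log ((K:ℝ)+1)) ≤ Real.eulerMascheroniSeq K := by
    filter_upwards [eventually_ge_atTop (2*m)] with K hK
    have h1 := hlow (2*m) K (by omega) hK
    have hc1 : (((2*m : ℕ)):ℝ) = 2*(m:ℝ) := by push_cast; ring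
    rw [hc1] at h1
    have h2 : Real.eulerMascheroniSeq K = HH K - log ((K:ℝ)+1) := by
      rw [Real.eulerMascheroniSeq, hHH]
    rw [h2]
    have hKb : (0:ℝ) ≤ 1/(2*(K:ℝ)*((K:ℝ)+1)) := by positivity
    have he : 2*(2*(m:ℝ))+1 = 4*(m:ℝ)+1 := by ring
    rw [he] at h1
    simp only [hΔ]
    linarith
  have hT : Tendsto (fun K : ℕ => HH (2*m) - log (4*(m:ℝ)+1) - Δ
      + (log (2*(K:ℝ)+1) - log ((K:ℝ)+1))) atTop
      (𝓝 (HH (2*m) - log (4*(m:ℝ)+1) - Δ + log 2)) := by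
    refine tendsto_const_nhds.add ?_
    have hr : Tendsto (fun K : ℕ => (2*(K:ℝ)+1)/((K:ℝ)+1)) atTop (𝓝 2) := by
      have h1 : Tendsto (fun K : ℕ => ((K:ℝ)+1)) atTop atTop :=
        tendsto_atTop_add_const_right _ _ tendsto_natCast_atTop_atTop
      have h2 : Tendsto (fun K : ℕ => 2 - 1/((K:ℝ)+1)) atTop (𝓝 (2-0)) :=
        tendsto_const_nhds.sub (Tendsto.div_atTop tendsto_const_nhds h1)
      rw [sub_zero] at h2
      refine h2.congr fun K => ?_
      have : ((K:ℝ)+1) ≠ 0 := by positivity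
      field_simp
      ring
    have hlog := ((Real.continuousAt_log (by norm_num : (2:ℝ) ≠ 0)).tendsto).comp hr
    refine hlog.congr fun K => ?_
    simp only [Function.comp]
    rw [log_div (by positivity) (by positivity)]
  have := le_of_tendsto_of_tendsto hT Real.tendsto_eulerMascheroniSeq hEv
  linarith

lemma tail_lb (m : ℕ) :
    1/6 * (1/((m:ℝ)+1/2)) ≤ ∑' k : ℕ, (π * lr (k+m) ^ 2 - 2/(2*((k+m : ℕ):ℝ)+1)) := by
  have hsum : Summable (fun k : ℕ => π * lr (k+m) ^ 2 - 2/(2*((k+m:ℕ):ℝ)+1)) :=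
    (summable_nat_add_iff m).2 hasSum_main.summable
  set u : ℕ → ℝ := fun j => 1/6 * (1/((j:ℝ)+(m:ℝ)+1/2)) with hu
  have hut : Tendsto u atTop (𝓝 0) := by
    rw [hu]
    have h1 : Tendsto (fun j : ℕ => ((j:ℝ)+(m:ℝ)+1/2)) atTop atTop :=
      tendsto_atTop_add_const_right _ _
        (tendsto_atTop_add_const_right _ _ tendsto_natCast_atTop_atTop)
    have := Tendsto.div_atTop (tendsto_const_nhds (x := (1:ℝ))) h1
    simpa using this.const_mul (1/6 : ℝ)
  have hts : HasSum (fun j => u j - u (j+1)) (u 0) := by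
    rw [hasSum_iff_tendsto_nat_of_nonneg]
    · have hps : ∀ N, ∑ j ∈ range N, (u j - u (j+1)) = u 0 - u N :=
        fun N => Finset.sum_range_sub' u N
      rw [funext hps]
      have := (tendsto_const_nhds (x := u 0) (f := atTop (α := ℕ))).sub hut
      simpa using this
    · intro j
      have h1 : (0:ℝ) < (j:ℝ)+(m:ℝ)+1/2 := by positivity
      have h2 : (0:ℝ) < ((j:ℕ)+1:ℝ)+(m:ℝ)+1/2 := by positivity
      simp only [hu]
      have : 1/(((j:ℕ)+1:ℝ)+(m:ℝ)+1/2) ≤ 1/((j:ℝ)+(m:ℝ)+1/2) := by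
        apply one_div_le_one_div_of_le h1
        push_cast
        linarith
      push_cast at this ⊢
      linarith
  have hterm : ∀ j : ℕ, u j - u (j+1) ≤ π * lr (j+m) ^ 2 - 2/(2*((j+m:ℕ):ℝ)+1) := by
    intro j
    set x : ℝ := ((j+m:ℕ):ℝ) with hx
    have hx0 : (0:ℝ) ≤ x := Nat.cast_nonneg _
    have hp := p_gt (j+m)
    have e1 : u j - u (j+1) = 1/6 * (1/(x+1/2) - 1/(x+3/2)) := by
      simp only [hu, hx]
      push_cast
      ring
    have e2 : 1/6 * (1/(x+1/2) - 1/(x+3/2)) = 1/6 * (1/((x+1/2)*(x+3/2))) := by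
      rw [div_sub_div _ _ (by positivity : x+1/2 ≠ 0) (by positivity : x+3/2 ≠ 0)]
      ring_nf
    have e3 : 1/(x+1/3) - 2/(2*x+1) = 1/6 * (1/((x+1/3)*(x+1/2))) := by
      field_simp
      ring
    have e4 : (1:ℝ)/6 * (1/((x+1/2)*(x+3/2))) ≤ 1/6 * (1/((x+1/3)*(x+1/2))) := by
      have h5 : (0:ℝ) < (x+1/3)*(x+1/2) := by positivity
      have h6 : (x+1/3)*(x+1/2) ≤ (x+1/2)*(x+3/2) := by nlinarith
      have := one_div_le_one_div_of_le h5 h6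
      linarith
    rw [e1]
    rw [← hx] at hp
    linarith [e2, e3, e4, hp]
  have := Summable.tsum_le_tsum hterm hts.summable hsum
  rw [hts.tsum_eq] at this
  simp only [hu] at this
  push_cast at this ⊢
  simp only [zero_add] at this
  linarith

theorem landau_upper_bound_order_zero (n : ℕ) :
    Real.pi * landauG n <
      Real.log (16 * ((n : ℝ) + 1)) + Real.eulerMascheroniConstant := by
  obtain ⟨m, hm, hm1⟩ : ∃ m : ℕ, n + 1 = m ∧ 1 ≤ m := ⟨n+1, rfl, by omega⟩
  have hq1 : (1:ℝ) ≤ (m:ℝ) := by exact_mod_cast hm1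
  set q : ℝ := (m:ℝ) with hq
  have hnm : ((n:ℝ)+1) = q := by rw [hq, ← hm]; push_cast; ring
  have hG : π * landauG n = ∑ k ∈ range m, (π * lr k ^ 2) := by
    rw [landauG, Finset.mul_sum, hm]
    exact Finset.sum_congr rfl fun k _ => by rw [lr_def]
  have hsplit := Summable.sum_add_tsum_nat_add (f := fun k : ℕ => π * lr k ^ 2 - 2/(2*(k:ℝ)+1)) m
    hasSum_main.summable
  rw [hasSum_main.tsum_eq] at hsplit
  set T : ℝ := ∑' k : ℕ, (π * lr (k+m) ^ 2 - 2/(2*((k+m : ℕ):ℝ)+1)) with hT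
  have hpartial : ∑ k ∈ range m, (π * lr k ^2 - 2/(2*(k:ℝ)+1)) = 2*log 2 - T := by
    rw [hT]
    linarith [hsplit]
  have hsum_split : ∑ k ∈ range m, (π * lr k ^ 2)
      = (2*log 2 - T) + (2 * HH (2*m) - HH m) := by
    rw [← hpartial, ← hodd m, ← Finset.sum_add_distrib]
    exact Finset.sum_congr rfl fun k _ => by ring
  have hTail : 1/6 * (1/(q+1/2)) ≤ T := tail_lb m
  have hγ := gam_lb m hm1
  have hup' : HH (2*m) - HH m ≤ log (4*q+1) - log (2*q+1) := by
    have := hup m (2*m) (by omega)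
    have hc : ((2*m : ℕ):ℝ) = 2*q := by rw [Nat.cast_mul, hq]; norm_num
    rw [hc] at this
    have he : 2*(2*q)+1 = 4*q+1 := by ring
    rw [he] at this
    exact this
  have hlogm : log (16 * ((n:ℝ)+1)) = 4*log 2 + log q := by
    rw [hnm, log_mul (by norm_num) (by positivity),
      show (16:ℝ) = 2^4 by norm_num, log_pow]
    push_cast
    ring
  have hA : 2*log (4*q+1) - log (2*q+1) - 3*log 2 - log q
      = log ((4*q+1)^2/((2*q+1)*(8*q))) := by
    rw [log_div (by positivity) (by positivity), log_pow,
      log_mul (by positivity) (by positivity),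
      log_mul (by norm_num : (8:ℝ) ≠ 0) (by positivity),
      show (8:ℝ) = 2^3 by norm_num, log_pow]
    push_cast
    ring
  have hX : log ((4*q+1)^2/((2*q+1)*(8*q))) ≤ 1/(8*q*(2*q+1)) := by
    have hXe : (4*q+1)^2/((2*q+1)*(8*q)) = 1 + 1/(8*q*(2*q+1)) := by
      field_simp
      ring
    rw [hXe]
    have := log_le_sub_one_of_pos (show (0:ℝ) < 1 + 1/(8*q*(2*q+1)) by positivity)
    linarith
  have hΔ : (1/8)*(1/(2*(2*q)*(2*q+1))) = 1/(32*q*(2*q+1)) := by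
    have hq0 : (0:ℝ) < q := by linarith
    field_simp
    ring
  have hfinal : 1/(8*q*(2*q+1)) + 1/(32*q*(2*q+1)) < 1/6 * (1/(q+1/2)) := by
    have e : 1/(8*q*(2*q+1)) + 1/(32*q*(2*q+1)) = 5/(32*(q*(2*q+1))) := by
      field_simp
      ring
    have e2 : 1/6 * (1/(q+1/2)) = 1/(6*(q+1/2)) := by
      field_simp
    rw [e, e2, div_lt_div_iff₀ (by positivity) (by positivity)]
    nlinarith
  rw [hG, hsum_split, hlogm]
  nlinarith [hγ, hup', hX, hA, hΔ, hfinal, hTail]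
end

section
/- For all n \ge 0, with N = n+1, \ln(16N) + \gamma - 1/(4N) < \pi G_n, i.e. the first truncation A_1(N) = \ln(16N) + \gamma - 1/(4N) is a strict lower bound for \pi G_n. -/
open Filter Finset Real intervalIntegral MeasureTheory Topology

namespace LandauAux


/-- working definition: `c k = ∏ (2i+1)/(2i+2)` = `(2k choose k)/4^k`. -/
noncomputable def c (k : ℕ) : ℝ := ∏ i ∈ Finset.range k, (2 * (i : ℝ) + 1) / (2 * i + 2)

lemma c_zero : c 0 = 1 := by simp [c]

lemma c_succ (k : ℕ) : c (k + 1) = c k * ((2 * k + 1) / (2 * k + 2)) := by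
  rw [c, Finset.prod_range_succ, ← c]

lemma c_pos (k : ℕ) : 0 < c k := by
  refine Finset.prod_pos fun i _ => div_pos (by positivity) (by positivity)

lemma c_le_one (k : ℕ) : c k ≤ 1 := by
  refine Finset.prod_le_one (fun i _ => by positivity) fun i _ => ?_
  rw [div_le_one (by positivity)]; linarith

lemma choose_eq_c (k : ℕ) : ((Nat.choose (2 * k) k : ℝ)) / 4 ^ k = c k := by
  induction k with
  | zero => simp [c_zero]
  | succ n ih =>
    have h := Nat.succ_mul_centralBinom_succ n
    have h' : ((n : ℝ) + 1) * (Nat.choose (2 * (n + 1)) (n + 1) : ℝ)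
        = 2 * (2 * n + 1) * (Nat.choose (2 * n) n : ℝ) := by
      have := congrArg (fun m : ℕ => (m : ℝ)) h
      push_cast [Nat.centralBinom] at this ⊢
      convert this using 2 <;> ring_nf
    rw [c_succ, ← ih]
    have hn1 : ((n : ℝ) + 1) ≠ 0 := by positivity
    field_simp at h' ⊢
    linear_combination (4:ℝ) ^ n * 2 * h'



lemma conv_one (n : ℕ) : ∑ i ∈ Finset.range (n + 1), c i * c (n - i) = 1 := by
  induction n with
  | zero => simp [c_zero]
  | succ n ih =>
    have tel : ∑ i ∈ Finset.range (n + 1),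
        ((fun i : ℕ => -((i : ℝ) / (n + 1)) * c i * c (n + 1 - i)) (i + 1)
          - (fun i : ℕ => -((i : ℝ) / (n + 1)) * c i * c (n + 1 - i)) i)
        = -c (n + 1) := by
      rw [Finset.sum_range_sub (f := fun i : ℕ => -((i : ℝ) / (n + 1)) * c i * c (n + 1 - i))]
      simp [c_zero]
      field_simp
    have per : ∀ i ∈ Finset.range (n + 1),
        c i * c (n + 1 - i) - c i * c (n - i)
          = ((fun i : ℕ => -((i : ℝ) / (n + 1)) * c i * c (n + 1 - i)) (i + 1)
            - (fun i : ℕ => -((i : ℝ) / (n + 1)) * c i * c (n + 1 - i)) i) := by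
      intro i hi
      have hin : i ≤ n := by simpa [Nat.lt_succ_iff] using hi
      have h1 : n + 1 - i = (n - i) + 1 := by omega
      have h2 : n + 1 - (i + 1) = n - i := by omega
      have hcast : ((n - i : ℕ) : ℝ) = (n : ℝ) - i := by
        push_cast [Nat.cast_sub hin]; ring
      simp only [h1, h2, c_succ]
      push_cast [hcast]
      have hA := c_pos i; have hB := c_pos (n - i)
      set A := c i; set B := c (n - i)
      have d1 : (2 * ((n : ℝ) - i) + 2) ≠ 0 := by
        have : (i : ℝ) ≤ n := by exact_mod_cast hin
        nlinarith
      have d2 : (2 * (i : ℝ) + 2) ≠ 0 := by positivity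
      have d3 : ((n : ℝ) + 1) ≠ 0 := by positivity
      have d4 : ((n : ℝ) - i + 1) ≠ 0 := by
        have : (i : ℝ) ≤ n := by exact_mod_cast hin
        linarith
      field_simp
      ring
    have sum_eq : ∑ i ∈ Finset.range (n + 1), (c i * c (n + 1 - i) - c i * c (n - i))
        = -c (n + 1) := by rw [Finset.sum_congr rfl per, tel]
    have expand : ∑ i ∈ Finset.range (n + 2), c i * c (n + 1 - i)
        = ∑ i ∈ Finset.range (n + 1), c i * c (n + 1 - i) + c (n + 1) := by
      rw [Finset.sum_range_succ]; simp [c_zero]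
    rw [expand]
    have : ∑ i ∈ Finset.range (n + 1), c i * c (n + 1 - i)
        = ∑ i ∈ Finset.range (n + 1), c i * c (n - i) - c (n + 1) := by
      rw [Finset.sum_sub_distrib] at sum_eq; linarith
    rw [this, ih]; ring

lemma summable_cu {u : ℝ} (h0 : 0 ≤ u) (h1 : u < 1) :
    Summable fun k => c k * u ^ k := by
  refine Summable.of_nonneg_of_le (fun k => mul_nonneg (c_pos k).le (pow_nonneg h0 k))
    (fun k => ?_) (summable_geometric_of_lt_one h0 h1)
  calc c k * u ^ k ≤ 1 * u ^ k := by
        exact mul_le_mul_of_nonneg_right (c_le_one k) (by positivity)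
    _ = u ^ k := one_mul _

/-- binomial series for `(1-u)^{-1/2}`. -/
lemma hasSum_binomial {u : ℝ} (h0 : 0 ≤ u) (h1 : u < 1) :
    HasSum (fun k => c k * u ^ k) (1 / Real.sqrt (1 - u)) := by
  have hs := summable_cu h0 h1
  set F := ∑' k, c k * u ^ k with hF
  have hnorm : Summable fun k => ‖c k * u ^ k‖ := by
    simpa [Real.norm_eq_abs, abs_of_nonneg, (c_pos _).le, h0,
      abs_of_nonneg (mul_nonneg (c_pos _).le (pow_nonneg h0 _))] using hs
  have cauchy : F * F = ∑' n : ℕ, ∑ k ∈ Finset.range (n + 1),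
      (c k * u ^ k) * (c (n - k) * u ^ (n - k)) :=
    tsum_mul_tsum_eq_tsum_sum_range_of_summable_norm hnorm hnorm
  have inner : ∀ n : ℕ, ∑ k ∈ Finset.range (n + 1),
      (c k * u ^ k) * (c (n - k) * u ^ (n - k)) = u ^ n := by
    intro n
    have : ∀ k ∈ Finset.range (n + 1),
        (c k * u ^ k) * (c (n - k) * u ^ (n - k)) = (c k * c (n - k)) * u ^ n := by
      intro k hk
      have hk' : k ≤ n := by simpa [Nat.lt_succ_iff] using hk
      rw [show (c k * u ^ k) * (c (n - k) * u ^ (n - k)) = (c k * c (n - k)) * (u ^ k * u ^ (n - k))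
          by ring, ← pow_add, Nat.add_sub_cancel' hk']
    rw [Finset.sum_congr rfl this, ← Finset.sum_mul, conv_one, one_mul]
  have geom : (∑' n : ℕ, u ^ n) = (1 - u)⁻¹ := tsum_geometric_of_lt_one h0 h1
  have hFF : F * F = (1 - u)⁻¹ := by
    rw [cauchy, tsum_congr inner, geom]
  have hFpos : 0 < F := by
    have h0le : ∀ k, 0 ≤ c k * u ^ k := fun k => mul_nonneg (c_pos k).le (pow_nonneg h0 k)
    have : c 0 * u ^ 0 ≤ F := Summable.le_tsum hs 0 fun k _ => h0le k
    simp [c_zero] at this; linarith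
  have hu : 0 < 1 - u := by linarith
  have hval : F = 1 / Real.sqrt (1 - u) := by
    have h2 : (1 / Real.sqrt (1 - u)) ^ 2 = (1 - u)⁻¹ := by
      rw [div_pow, one_pow, Real.sq_sqrt hu.le, one_div]
    have hppos : 0 < 1 / Real.sqrt (1 - u) := by positivity
    nlinarith [hFF, h2]
  rw [← hval]; exact hs.hasSum



lemma sq_sin_le_one (t : ℝ) : Real.sin t ^ 2 ≤ 1 := by
  nlinarith [Real.neg_one_le_sin t, Real.sin_le_one t]

lemma one_sub_sq_sin_pos {x : ℝ} (h1 : x < 1) (h0 : 0 ≤ x) (t : ℝ) :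
    0 < 1 - x * Real.sin t ^ 2 := by
  nlinarith [sq_sin_le_one t, sq_nonneg (Real.sin t)]

lemma cont_integrand {x : ℝ} (h0 : 0 ≤ x) (h1 : x < 1) :
    Continuous fun t => 1 / Real.sqrt (1 - x * Real.sin t ^ 2) := by
  apply Continuous.div continuous_const
  · exact (continuous_const.sub (continuous_const.mul (Real.continuous_sin.pow 2))).sqrt
  · intro t
    exact (Real.sqrt_pos.mpr (one_sub_sq_sin_pos h1 h0 t)).ne'

lemma summable_picsq {x : ℝ} (h0 : 0 ≤ x) (h1 : x < 1) :
    Summable fun k => π * c k ^ 2 * x ^ k := by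
  refine Summable.of_nonneg_of_le
    (fun k => by positivity)
    (fun k => ?_) ((summable_geometric_of_lt_one h0 h1).mul_left π)
  have h1' : c k ^ 2 ≤ 1 := by nlinarith [c_pos k, c_le_one k]
  have hx : 0 ≤ x ^ k := by positivity
  have h2 : 0 ≤ c k ^ 2 := sq_nonneg _
  nlinarith [Real.pi_pos, mul_le_mul_of_nonneg_right h1' hx]

/-- The key identity: `π ∑ c_k² x^k = ∫_0^π (1 - x sin²t)^(-1/2)`. -/
lemma hasSum_K {x : ℝ} (h0 : 0 ≤ x) (h1 : x < 1) :
    HasSum (fun k => π * c k ^ 2 * x ^ k)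
      (∫ t in (0:ℝ)..π, 1 / Real.sqrt (1 - x * Real.sin t ^ 2)) := by
  have hsum := summable_picsq h0 h1
  rw [hsum.hasSum_iff_tendsto_nat]
  have key : ∀ N : ℕ, (∫ t in (0:ℝ)..π, ∑ k ∈ Finset.range N, c k * (x * Real.sin t ^ 2) ^ k)
      = ∑ k ∈ Finset.range N, π * c k ^ 2 * x ^ k := by
    intro N
    rw [intervalIntegral.integral_finset_sum]
    · refine Finset.sum_congr rfl fun k _ => ?_
      have : ∀ t : ℝ, c k * (x * Real.sin t ^ 2) ^ k = (c k * x ^ k) * Real.sin t ^ (2 * k) := by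
        intro t; rw [mul_pow, pow_mul']; ring
      rw [intervalIntegral.integral_congr (fun t _ => this t),
        intervalIntegral.integral_const_mul, integral_sin_pow_even]
      rw [show (∏ i ∈ Finset.range k, (2 * (i:ℝ) + 1) / (2 * i + 2)) = c k from rfl]
      ring
    · intro k _
      apply Continuous.intervalIntegrable
      exact continuous_const.mul ((continuous_const.mul (Real.continuous_sin.pow 2)).pow k)
  have lim := intervalIntegral.tendsto_integral_filter_of_dominated_convergence
    (μ := MeasureTheory.volume) (a := (0:ℝ)) (b := π)
    (F := fun N t => ∑ k ∈ Finset.range N, c k * (x * Real.sin t ^ 2) ^ k)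
    (f := fun t => 1 / Real.sqrt (1 - x * Real.sin t ^ 2))
    (bound := fun _ => (1 - x)⁻¹)
    (l := atTop)
    ?_ ?_ ?_ ?_
  · have := lim
    simp only [key] at this
    exact this
  · refine Filter.Eventually.of_forall fun N => Continuous.aestronglyMeasurable ?_
    exact continuous_finset_sum _ fun k _ =>
      continuous_const.mul ((continuous_const.mul (Real.continuous_sin.pow 2)).pow k)
  · refine Filter.Eventually.of_forall fun N => Filter.Eventually.of_forall fun t _ => ?_
    have hu0 : 0 ≤ x * Real.sin t ^ 2 := by positivity
    have hux : x * Real.sin t ^ 2 ≤ x := by nlinarith [sq_sin_le_one t]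
    have hterm : ∀ k, c k * (x * Real.sin t ^ 2) ^ k ≤ x ^ k := by
      intro k
      calc c k * (x * Real.sin t ^ 2) ^ k ≤ 1 * (x * Real.sin t ^ 2) ^ k :=
            mul_le_mul_of_nonneg_right (c_le_one k) (by positivity)
        _ = (x * Real.sin t ^ 2) ^ k := one_mul _
        _ ≤ x ^ k := pow_le_pow_left₀ hu0 hux k
    have hnn : 0 ≤ ∑ k ∈ Finset.range N, c k * (x * Real.sin t ^ 2) ^ k :=
      Finset.sum_nonneg fun k _ => mul_nonneg (c_pos k).le (by positivity)
    rw [Real.norm_eq_abs, abs_of_nonneg hnn]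
    calc ∑ k ∈ Finset.range N, c k * (x * Real.sin t ^ 2) ^ k
        ≤ ∑ k ∈ Finset.range N, x ^ k := Finset.sum_le_sum fun k _ => hterm k
      _ ≤ ∑' k : ℕ, x ^ k := Summable.sum_le_tsum _ (fun k _ => by positivity)
            (summable_geometric_of_lt_one h0 h1)
      _ = (1 - x)⁻¹ := tsum_geometric_of_lt_one h0 h1
  · exact intervalIntegrable_const
  · refine Filter.Eventually.of_forall fun t _ => ?_
    have hu0 : 0 ≤ x * Real.sin t ^ 2 := by positivity
    have hu1 : x * Real.sin t ^ 2 < 1 := by nlinarith [sq_sin_le_one t, sq_nonneg (Real.sin t)]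
    exact (hasSum_binomial hu0 hu1).tendsto_sum_nat



lemma Q_exact {x : ℝ} (hx0 : 0 < x) (hx1 : x < 1) :
    (∫ t in (0:ℝ)..π, Real.sin t / Real.sqrt (1 - x * Real.sin t ^ 2))
      = (2 / Real.sqrt x) * Real.arsinh (Real.sqrt (x / (1 - x))) := by
  set b := Real.sqrt (x / (1 - x)) with hb
  have h1x : (0:ℝ) < 1 - x := by linarith
  have hbsq : b ^ 2 = x / (1 - x) := Real.sq_sqrt (by positivity)
  have hderiv : ∀ t ∈ Set.uIcc (0:ℝ) π,
      HasDerivAt (fun t => -(Real.sqrt x)⁻¹ * Real.arsinh (b * Real.cos t))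
        (Real.sin t / Real.sqrt (1 - x * Real.sin t ^ 2)) t := by
    intro t _
    have hcos : HasDerivAt (fun t => b * Real.cos t) (b * (-Real.sin t)) t :=
      (Real.hasDerivAt_cos t).const_mul b
    have harsinh := (Real.hasDerivAt_arsinh (b * Real.cos t)).comp t hcos
    have hfull := harsinh.const_mul (-(Real.sqrt x)⁻¹)
    refine hfull.congr_deriv ?_
    symm
    have hden : 1 + (b * Real.cos t) ^ 2 = (1 - x * Real.sin t ^ 2) / (1 - x) := by
      have hpy := Real.sin_sq_add_cos_sq t
      rw [mul_pow, hbsq]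
      field_simp
      nlinarith [hpy]
    rw [hden, Real.sqrt_div' _ h1x.le]
    have hsx : Real.sqrt x > 0 := Real.sqrt_pos.mpr hx0
    have hs1x : Real.sqrt (1 - x) > 0 := Real.sqrt_pos.mpr h1x
    have hsd : Real.sqrt (1 - x * Real.sin t ^ 2) > 0 :=
      Real.sqrt_pos.mpr (one_sub_sq_sin_pos hx1 hx0.le t)
    have hbval : b = Real.sqrt x / Real.sqrt (1 - x) := Real.sqrt_div hx0.le _
    rw [hbval]
    field_simp
  rw [intervalIntegral.integral_eq_sub_of_hasDerivAt hderiv]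
  · simp only [Real.cos_pi, Real.cos_zero, mul_neg_one, mul_one, Real.arsinh_neg]
    ring
  · apply Continuous.intervalIntegrable
    apply Continuous.div Real.continuous_sin
    · exact (continuous_const.sub (continuous_const.mul (Real.continuous_sin.pow 2))).sqrt
    · exact fun t => (Real.sqrt_pos.mpr (one_sub_sq_sin_pos hx1 hx0.le t)).ne'

lemma arsinh_val {x : ℝ} (hx0 : 0 < x) (hx1 : x < 1) :
    Real.arsinh (Real.sqrt (x / (1 - x)))
      = Real.log (1 + Real.sqrt x) - Real.log (1 - x) / 2 := by
  have h1x : (0:ℝ) < 1 - x := by linarith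
  rw [Real.arsinh]
  have h1 : 1 + Real.sqrt (x / (1 - x)) ^ 2 = 1 / (1 - x) := by
    rw [Real.sq_sqrt (by positivity)]; field_simp; ring
  rw [h1, Real.sqrt_div hx0.le, Real.sqrt_div (by norm_num : (0:ℝ) ≤ 1), Real.sqrt_one]
  have hs1x : Real.sqrt (1 - x) > 0 := Real.sqrt_pos.mpr h1x
  rw [show Real.sqrt x / Real.sqrt (1 - x) + 1 / Real.sqrt (1 - x)
      = (Real.sqrt x + 1) / Real.sqrt (1 - x) by field_simp]
  rw [Real.log_div (by positivity) hs1x.ne', Real.log_sqrt h1x.le]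
  ring_nf



noncomputable def xseq (n : ℕ) : ℝ := 1 - ((n : ℝ) + 2)⁻¹

lemma xseq_mem (n : ℕ) : 1/2 ≤ xseq n ∧ xseq n < 1 := by
  constructor
  · have : ((n : ℝ) + 2)⁻¹ ≤ 1/2 := by
      rw [inv_le_comm₀ (by positivity) (by norm_num)]
      have : (0:ℝ) ≤ (n:ℝ) := Nat.cast_nonneg n
      linarith
    unfold xseq; linarith
  · unfold xseq
    have : (0:ℝ) < ((n : ℝ) + 2)⁻¹ := by positivity
    linarith

lemma tendsto_xseq : Tendsto xseq atTop (𝓝 1) := by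
  have h : Tendsto (fun n : ℕ => ((n : ℝ) + 2)⁻¹) atTop (𝓝 0) :=
    tendsto_inv_atTop_zero.comp
      (tendsto_atTop_add_const_right _ 2 tendsto_natCast_atTop_atTop)
  have := (tendsto_const_nhds (x := (1:ℝ)) (f := atTop (α := ℕ))).sub h
  exact (by simpa using this : Tendsto (fun n : ℕ => 1 - ((n : ℝ) + 2)⁻¹) atTop (𝓝 1))

lemma sin_lt_one_of_ne {t : ℝ} (ht : t ∈ Set.Ioc 0 π) (hne : t ≠ π / 2) : Real.sin t < 1 := by
  by_contra hcon
  push_neg at hcon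
  have hs1 : Real.sin t = 1 := le_antisymm (Real.sin_le_one t) hcon
  have hcos : Real.cos t = 0 := by nlinarith [Real.sin_sq_add_cos_sq t, sq_nonneg (Real.cos t)]
  rcases Real.cos_eq_zero_iff.mp hcos with ⟨k, hk⟩
  have hpi := Real.pi_pos
  have h0t := ht.1
  have htpi := ht.2
  have hk0 : k = 0 := by
    have h1 : (0:ℝ) < (2 * k + 1) := by
      by_contra hcon2; push_neg at hcon2; nlinarith
    have h2 : ((2 * k + 1) : ℝ) ≤ 2 := by
      by_contra hcon2; push_neg at hcon2; nlinarith
    have hk1 : (0:ℤ) < 2 * k + 1 := by exact_mod_cast h1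
    have hk2 : (2 * k + 1 : ℤ) ≤ 2 := by exact_mod_cast h2
    omega
  rw [hk0] at hk
  push_cast at hk
  exact hne (by rw [hk]; ring)

lemma limit_fun_eq : ∀ t ∈ Set.uIcc (0:ℝ) π,
    (1 - Real.sin t) / Real.sqrt (1 - Real.sin t ^ 2)
      = |Real.cos t| / (1 + Real.sin t) := by
  intro t ht
  rw [Set.uIcc_of_le Real.pi_pos.le] at ht
  have hs0 : 0 ≤ Real.sin t := Real.sin_nonneg_of_nonneg_of_le_pi ht.1 ht.2
  have hpy := Real.sin_sq_add_cos_sq t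
  have h1 : 1 - Real.sin t ^ 2 = Real.cos t ^ 2 := by linarith
  rw [h1, Real.sqrt_sq_eq_abs]
  rcases eq_or_ne (Real.cos t) 0 with hc | hc
  · have hs1 : Real.sin t = 1 := by nlinarith [Real.sin_le_one t]
    rw [hc, hs1]; simp
  · have hcabs : 0 < |Real.cos t| := abs_pos.mpr hc
    rw [div_eq_div_iff hcabs.ne' (by positivity)]
    nlinarith [sq_abs (Real.cos t)]

/-- limit of the regular part. -/
lemma R_tendsto : Tendsto
    (fun n => ∫ t in (0:ℝ)..π, (1 - Real.sin t) / Real.sqrt (1 - xseq n * Real.sin t ^ 2))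
    atTop (𝓝 (2 * Real.log 2)) := by
  have hpi := Real.pi_pos
  have hae : ∀ᵐ t : ℝ, t ≠ π / 2 := by
    rw [MeasureTheory.ae_iff]
    simpa using MeasureTheory.measure_singleton (π / 2 : ℝ)
  have hlim : Tendsto
      (fun n => ∫ t in (0:ℝ)..π, (1 - Real.sin t) / Real.sqrt (1 - xseq n * Real.sin t ^ 2))
      atTop (𝓝 (∫ t in (0:ℝ)..π, (1 - Real.sin t) / Real.sqrt (1 - Real.sin t ^ 2))) := by
    apply intervalIntegral.tendsto_integral_filter_of_dominated_convergence
      (bound := fun _ => (1:ℝ))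
    · refine Filter.Eventually.of_forall fun n => Continuous.aestronglyMeasurable ?_
      have hx := xseq_mem n
      apply Continuous.div (continuous_const.sub Real.continuous_sin)
      · exact (continuous_const.sub (continuous_const.mul (Real.continuous_sin.pow 2))).sqrt
      · exact fun t => (Real.sqrt_pos.mpr (one_sub_sq_sin_pos hx.2 (by linarith [hx.1]) t)).ne'
    · refine Filter.Eventually.of_forall fun n => Filter.Eventually.of_forall fun t ht => ?_
      have hx := xseq_mem n
      have hx0 : (0:ℝ) ≤ xseq n := by linarith [hx.1]
      rw [Set.uIoc_of_le Real.pi_pos.le] at ht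
      have hs0 : 0 ≤ Real.sin t := Real.sin_nonneg_of_nonneg_of_le_pi ht.1.le ht.2
      have hs1 : Real.sin t ≤ 1 := Real.sin_le_one t
      have hden : 0 < Real.sqrt (1 - xseq n * Real.sin t ^ 2) :=
        Real.sqrt_pos.mpr (one_sub_sq_sin_pos hx.2 hx0 t)
      have hnum : (1 - Real.sin t) ≤ Real.sqrt (1 - xseq n * Real.sin t ^ 2) := by
        rw [show (1 - Real.sin t) = Real.sqrt ((1 - Real.sin t) ^ 2) by
          rw [Real.sqrt_sq (by linarith)]]
        apply Real.sqrt_le_sqrt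
        nlinarith [sq_nonneg (Real.sin t)]
      have hnn : 0 ≤ (1 - Real.sin t) / Real.sqrt (1 - xseq n * Real.sin t ^ 2) :=
        div_nonneg (by linarith) hden.le
      rw [Real.norm_eq_abs, abs_of_nonneg hnn, div_le_one hden]
      exact hnum
    · exact intervalIntegrable_const
    · filter_upwards [hae] with t htne ht
      rw [Set.uIoc_of_le Real.pi_pos.le] at ht
      have hs0 : 0 ≤ Real.sin t := Real.sin_nonneg_of_nonneg_of_le_pi ht.1.le ht.2
      have hs1 : Real.sin t < 1 := sin_lt_one_of_ne ht htne
      have hdenpos : 0 < 1 - Real.sin t ^ 2 := by nlinarith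
      have hx : Tendsto (fun n => 1 - xseq n * Real.sin t ^ 2) atTop
          (𝓝 (1 - Real.sin t ^ 2)) := by
        have h2 := tendsto_xseq.mul (tendsto_const_nhds (x := Real.sin t ^ 2))
        simpa using (tendsto_const_nhds (x := (1:ℝ))).sub h2
      have hsq : Tendsto (fun n => Real.sqrt (1 - xseq n * Real.sin t ^ 2)) atTop
          (𝓝 (Real.sqrt (1 - Real.sin t ^ 2))) :=
        (Real.continuous_sqrt.continuousAt).tendsto.comp hx
      exact (tendsto_const_nhds (x := 1 - Real.sin t)).div hsq
        (Real.sqrt_pos.mpr hdenpos).ne'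
  have hval : (∫ t in (0:ℝ)..π, (1 - Real.sin t) / Real.sqrt (1 - Real.sin t ^ 2))
      = 2 * Real.log 2 := by
    rw [intervalIntegral.integral_congr limit_fun_eq]
    have habs : Continuous fun t => |Real.cos t| := Real.continuous_cos.abs
    have hcont : ContinuousOn (fun t => |Real.cos t| / (1 + Real.sin t)) (Set.Icc 0 π) := by
      apply ContinuousOn.div habs.continuousOn
        (continuous_const.add Real.continuous_sin).continuousOn
      intro t ht
      have := Real.sin_nonneg_of_nonneg_of_le_pi ht.1 ht.2
      exact (by linarith : (0:ℝ) < 1 + Real.sin t).ne'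
    have i1 : IntervalIntegrable (fun t => |Real.cos t| / (1 + Real.sin t)) volume 0 (π/2) := by
      apply ContinuousOn.intervalIntegrable
      apply hcont.mono
      rw [Set.uIcc_of_le (by linarith)]
      exact Set.Icc_subset_Icc (le_refl _) (by linarith)
    have i2 : IntervalIntegrable (fun t => |Real.cos t| / (1 + Real.sin t)) volume (π/2) π := by
      apply ContinuousOn.intervalIntegrable
      apply hcont.mono
      rw [Set.uIcc_of_le (by linarith)]
      exact Set.Icc_subset_Icc (by linarith) (le_refl _)
    rw [← intervalIntegral.integral_add_adjacent_intervals i1 i2]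
    have e1 : (∫ t in (0:ℝ)..(π/2), |Real.cos t| / (1 + Real.sin t)) = Real.log 2 := by
      have hcg : ∀ t ∈ Set.uIcc (0:ℝ) (π/2),
          |Real.cos t| / (1 + Real.sin t) = Real.cos t / (1 + Real.sin t) := by
        intro t ht
        rw [Set.uIcc_of_le (by linarith)] at ht
        rw [abs_of_nonneg (Real.cos_nonneg_of_mem_Icc ⟨by linarith [ht.1], ht.2⟩)]
      rw [intervalIntegral.integral_congr hcg]
      have hftc : ∀ t ∈ Set.uIcc (0:ℝ) (π/2),
          HasDerivAt (fun t => Real.log (1 + Real.sin t)) (Real.cos t / (1 + Real.sin t)) t := by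
        intro t ht
        rw [Set.uIcc_of_le (by linarith)] at ht
        have hpos : 0 < 1 + Real.sin t := by
          have := Real.sin_nonneg_of_nonneg_of_le_pi ht.1 (by linarith [ht.2])
          linarith
        have hinner : HasDerivAt (fun t => 1 + Real.sin t) (Real.cos t) t := by
          simpa using (Real.hasDerivAt_sin t).const_add 1
        simpa using hinner.log hpos.ne'
      rw [intervalIntegral.integral_eq_sub_of_hasDerivAt hftc]
      · norm_num
      · apply ContinuousOn.intervalIntegrable
        apply ContinuousOn.div Real.continuous_cos.continuousOn
          (continuous_const.add Real.continuous_sin).continuousOn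
        intro t ht
        rw [Set.uIcc_of_le (by linarith)] at ht
        have := Real.sin_nonneg_of_nonneg_of_le_pi ht.1 (by linarith [ht.2])
        exact (by linarith : (0:ℝ) < 1 + Real.sin t).ne'
    have e2 : (∫ t in (π/2:ℝ)..π, |Real.cos t| / (1 + Real.sin t)) = Real.log 2 := by
      have hcg : ∀ t ∈ Set.uIcc (π/2:ℝ) π,
          |Real.cos t| / (1 + Real.sin t) = -Real.cos t / (1 + Real.sin t) := by
        intro t ht
        rw [Set.uIcc_of_le (by linarith)] at ht
        rw [abs_of_nonpos (Real.cos_nonpos_of_pi_div_two_le_of_le ht.1 (by linarith [ht.2]))]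
      rw [intervalIntegral.integral_congr hcg]
      have hftc : ∀ t ∈ Set.uIcc (π/2:ℝ) π,
          HasDerivAt (fun t => -Real.log (1 + Real.sin t)) (-Real.cos t / (1 + Real.sin t)) t := by
        intro t ht
        rw [Set.uIcc_of_le (by linarith)] at ht
        have hpos : 0 < 1 + Real.sin t := by
          have := Real.sin_nonneg_of_nonneg_of_le_pi (by linarith [ht.1]) ht.2
          linarith
        have hinner : HasDerivAt (fun t => 1 + Real.sin t) (Real.cos t) t := by
          simpa using (Real.hasDerivAt_sin t).const_add 1
        have := (hinner.log hpos.ne').neg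
        exact this.congr_deriv (by ring)
      rw [intervalIntegral.integral_eq_sub_of_hasDerivAt hftc]
      · norm_num
      · apply ContinuousOn.intervalIntegrable
        apply ContinuousOn.div (Real.continuous_cos.neg).continuousOn
          (continuous_const.add Real.continuous_sin).continuousOn
        intro t ht
        rw [Set.uIcc_of_le (by linarith)] at ht
        have := Real.sin_nonneg_of_nonneg_of_le_pi (by linarith [ht.1]) ht.2
        exact (by linarith : (0:ℝ) < 1 + Real.sin t).ne'
    rw [e1, e2]; ring
  rw [hval] at hlim
  exact hlim



/-- the central asymptotic: `K(xₙ) + log (1 - xₙ) → log 16`. -/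
lemma tendsto_Klog : Tendsto
    (fun n => (∫ t in (0:ℝ)..π, 1 / Real.sqrt (1 - xseq n * Real.sin t ^ 2))
      + Real.log (1 - xseq n)) atTop (𝓝 (Real.log 16)) := by
  have hx0 : ∀ n, (0:ℝ) < xseq n := fun n => lt_of_lt_of_le (by norm_num) (xseq_mem n).1
  have hx1 : ∀ n, xseq n < 1 := fun n => (xseq_mem n).2
  -- decompose each term
  have hdecomp : ∀ n, (∫ t in (0:ℝ)..π, 1 / Real.sqrt (1 - xseq n * Real.sin t ^ 2))
      + Real.log (1 - xseq n)
      = (∫ t in (0:ℝ)..π, (1 - Real.sin t) / Real.sqrt (1 - xseq n * Real.sin t ^ 2))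
        + (2 / Real.sqrt (xseq n)) * Real.log (1 + Real.sqrt (xseq n))
        + (1 - (Real.sqrt (xseq n))⁻¹) * Real.log (1 - xseq n) := by
    intro n
    have hcont1 : Continuous fun t =>
        (1 - Real.sin t) / Real.sqrt (1 - xseq n * Real.sin t ^ 2) := by
      apply Continuous.div (continuous_const.sub Real.continuous_sin)
      · exact (continuous_const.sub (continuous_const.mul (Real.continuous_sin.pow 2))).sqrt
      · exact fun t => (Real.sqrt_pos.mpr
          (one_sub_sq_sin_pos (hx1 n) (hx0 n).le t)).ne'
    have hcont2 : Continuous fun t =>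
        Real.sin t / Real.sqrt (1 - xseq n * Real.sin t ^ 2) := by
      apply Continuous.div Real.continuous_sin
      · exact (continuous_const.sub (continuous_const.mul (Real.continuous_sin.pow 2))).sqrt
      · exact fun t => (Real.sqrt_pos.mpr
          (one_sub_sq_sin_pos (hx1 n) (hx0 n).le t)).ne'
    have hsplit : (∫ t in (0:ℝ)..π, 1 / Real.sqrt (1 - xseq n * Real.sin t ^ 2))
        = (∫ t in (0:ℝ)..π, (1 - Real.sin t) / Real.sqrt (1 - xseq n * Real.sin t ^ 2))
          + ∫ t in (0:ℝ)..π, Real.sin t / Real.sqrt (1 - xseq n * Real.sin t ^ 2) := by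
      rw [← intervalIntegral.integral_add (hcont1.intervalIntegrable _ _)
        (hcont2.intervalIntegrable _ _)]
      apply intervalIntegral.integral_congr
      intro t _
      simp only []
      rw [← add_div]
      ring_nf
    rw [hsplit, Q_exact (hx0 n) (hx1 n), arsinh_val (hx0 n) (hx1 n)]
    generalize (∫ t in (0:ℝ)..π, (1 - Real.sin t) / Real.sqrt (1 - xseq n * Real.sin t ^ 2)) = I
    have hsq : Real.sqrt (xseq n) > 0 := Real.sqrt_pos.mpr (hx0 n)
    field_simp
    ring
  simp only [hdecomp]
  have lim2 : Tendsto (fun n => (2 / Real.sqrt (xseq n)) * Real.log (1 + Real.sqrt (xseq n)))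
      atTop (𝓝 (2 * Real.log 2)) := by
    have hsqrt : Tendsto (fun n => Real.sqrt (xseq n)) atTop (𝓝 1) := by
      have := (Real.continuous_sqrt.continuousAt (x := (1:ℝ))).tendsto.comp tendsto_xseq
      simpa [Function.comp_def] using this
    have h1 : Tendsto (fun n => 2 / Real.sqrt (xseq n)) atTop (𝓝 2) := by
      have := (tendsto_const_nhds (x := (2:ℝ))).div hsqrt one_ne_zero
      simpa [Pi.div_def] using this
    have h2 : Tendsto (fun n => Real.log (1 + Real.sqrt (xseq n))) atTop (𝓝 (Real.log 2)) := by
      have hadd : Tendsto (fun n => 1 + Real.sqrt (xseq n)) atTop (𝓝 2) := by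
        have := (tendsto_const_nhds (x := (1:ℝ))).add hsqrt
        norm_num at this
        exact this
      exact ((Real.continuousAt_log (by norm_num)).tendsto).comp hadd
    exact h1.mul h2
  have limg : Tendsto (fun n : ℕ => 2 * (Real.log ((n:ℝ) + 2) / ((n:ℝ) + 2)))
      atTop (𝓝 0) := by
    have hlog : Tendsto (fun y : ℝ => Real.log y / y) atTop (𝓝 0) :=
      Real.isLittleO_log_id_atTop.tendsto_div_nhds_zero
    have hcomp := hlog.comp
      (tendsto_atTop_add_const_right atTop (2:ℝ) tendsto_natCast_atTop_atTop)
    have := hcomp.const_mul (2:ℝ)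
    simpa using this
  have lim3 : Tendsto (fun n => (1 - (Real.sqrt (xseq n))⁻¹) * Real.log (1 - xseq n))
      atTop (𝓝 0) := by
    apply squeeze_zero_norm _ limg
    intro n
    have hx05 := (xseq_mem n).1
    have hx1' := (xseq_mem n).2
    have hxp := hx0 n
    have hn2 : (0:ℝ) < (n:ℝ) + 2 := by positivity
    have hsq : Real.sqrt (xseq n) > 0 := Real.sqrt_pos.mpr hxp
    have hsq1 : Real.sqrt (xseq n) ≤ 1 := by
      rw [show (1:ℝ) = Real.sqrt 1 by simp]
      exact Real.sqrt_le_sqrt (by linarith)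
    have hsqhalf : (1/2 : ℝ) ≤ Real.sqrt (xseq n) := by
      rw [show (1/2 : ℝ) = Real.sqrt ((1/2)^2) by rw [Real.sqrt_sq]; norm_num]
      exact Real.sqrt_le_sqrt (by norm_num; linarith)
    have hxle : xseq n ≤ Real.sqrt (xseq n) := by
      nlinarith [Real.sq_sqrt hxp.le, Real.sqrt_nonneg (xseq n)]
    have h1mx : 1 - xseq n = ((n:ℝ) + 2)⁻¹ := by unfold xseq; ring
    have hlogval : Real.log (1 - xseq n) = -Real.log ((n:ℝ) + 2) := by
      rw [h1mx, Real.log_inv]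
    have hlognn : 0 ≤ Real.log ((n:ℝ) + 2) := Real.log_nonneg (by linarith)
    rw [Real.norm_eq_abs, abs_mul, hlogval, abs_neg, abs_of_nonneg hlognn]
    have habs1 : |1 - (Real.sqrt (xseq n))⁻¹| ≤ 2 * (1 - xseq n) := by
      have hinv1 : 1 ≤ (Real.sqrt (xseq n))⁻¹ := by
        rw [le_inv_comm₀ (by norm_num) hsq]; simpa using hsq1
      have hinv2 : (Real.sqrt (xseq n))⁻¹ ≤ 2 := by
        rw [inv_le_comm₀ hsq (by norm_num)]; linarith
      rw [abs_of_nonpos (by linarith)]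
      have : (Real.sqrt (xseq n))⁻¹ - 1 = (1 - Real.sqrt (xseq n)) / Real.sqrt (xseq n) := by
        field_simp
      rw [neg_sub, this, div_le_iff₀ hsq]
      nlinarith
    rw [h1mx] at habs1
    calc |1 - (Real.sqrt (xseq n))⁻¹| * Real.log ((n:ℝ) + 2)
        ≤ (2 * ((n:ℝ) + 2)⁻¹) * Real.log ((n:ℝ) + 2) := by
          apply mul_le_mul_of_nonneg_right _ hlognn
          exact habs1
      _ = 2 * (Real.log ((n:ℝ) + 2) / ((n:ℝ) + 2)) := by rw [div_eq_mul_inv]; ring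
  have hfinal := (R_tendsto.add lim2).add lim3
  have : 2 * Real.log 2 + 2 * Real.log 2 + 0 = Real.log 16 := by
    rw [show (16:ℝ) = 2^4 by norm_num, Real.log_pow]
    push_cast; ring
  rw [this] at hfinal
  exact hfinal



lemma wallis_inv (k : ℕ) :
    (2 * (k:ℝ) + 1) * c k ^ 2
      = (∏ i ∈ Finset.range k, ((2:ℝ) * i + 2) / (2 * i + 1) * ((2 * i + 2) / (2 * i + 3)))⁻¹ := by
  induction k with
  | zero => simp [c_zero]
  | succ n ih =>
    rw [Finset.prod_range_succ, c_succ, mul_inv, ← ih]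
    have h1 : (2 * (n:ℝ) + 1) > 0 := by positivity
    have h2 : (2 * (n:ℝ) + 2) > 0 := by positivity
    have h3 : (2 * (n:ℝ) + 3) > 0 := by positivity
    have hc := c_pos n
    push_cast
    field_simp
    ring

lemma tendsto_t : Tendsto (fun k : ℕ => (2 * (k:ℝ) + 1) * c k ^ 2) atTop (𝓝 (2 / π)) := by
  have hW := Real.tendsto_prod_pi_div_two
  have hinv := hW.inv₀ (by positivity : (π/2 : ℝ) ≠ 0)
  simp only [← wallis_inv] at hinv
  convert hinv using 2
  rw [inv_div]

lemma anti_t : StrictAnti (fun k : ℕ => (2 * (k:ℝ) + 1) * c k ^ 2) := by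
  apply strictAnti_nat_of_succ_lt
  intro k
  rw [c_succ]
  have hc := c_pos k
  have h2 : (0:ℝ) < (2 * (k:ℝ) + 2) ^ 2 := by positivity
  push_cast
  rw [← mul_lt_mul_iff_of_pos_right h2]
  have hexp : (2 * ((k:ℝ) + 1) + 1) * (c k * ((2 * (k:ℝ) + 1) / (2 * (k:ℝ) + 2))) ^ 2
      * (2 * (k:ℝ) + 2) ^ 2 = (2 * (k:ℝ) + 3) * (c k ^ 2 * (2 * (k:ℝ) + 1) ^ 2) := by
    field_simp
    ring
  rw [hexp]
  nlinarith [mul_pos hc hc]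

lemma pic_gt (k : ℕ) : 2 / (2 * (k:ℝ) + 1) < π * c k ^ 2 := by
  have hlim : (2 / π : ℝ) ≤ (2 * ((k+1:ℕ):ℝ) + 1) * c (k+1) ^ 2 := by
    apply le_of_tendsto tendsto_t
    filter_upwards [eventually_ge_atTop (k+1)] with m hm
    exact anti_t.antitone hm
  have hstep : (2 * ((k+1:ℕ):ℝ) + 1) * c (k+1) ^ 2 < (2 * (k:ℝ) + 1) * c k ^ 2 :=
    anti_t (Nat.lt_succ_self k)
  have hpi := Real.pi_pos
  have h2k : (0:ℝ) < 2 * k + 1 := by positivity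
  have : 2 / π < (2 * (k:ℝ) + 1) * c k ^ 2 := lt_of_le_of_lt hlim hstep
  rw [div_lt_iff₀ hpi] at this
  rw [div_lt_iff₀ h2k]
  nlinarith

lemma mono_v : StrictMono (fun k : ℕ => (4 * (k:ℝ) + 1) * c k ^ 2) := by
  apply strictMono_nat_of_lt_succ
  intro k
  rw [c_succ]
  have hc := c_pos k
  have h2 : (0:ℝ) < (2 * (k:ℝ) + 2) ^ 2 := by positivity
  push_cast
  rw [← mul_lt_mul_iff_of_pos_right h2]
  have hexp : (4 * ((k:ℝ) + 1) + 1) * (c k * ((2 * (k:ℝ) + 1) / (2 * (k:ℝ) + 2))) ^ 2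
      * (2 * (k:ℝ) + 2) ^ 2 = (4 * (k:ℝ) + 5) * (c k ^ 2 * (2 * (k:ℝ) + 1) ^ 2) := by
    field_simp
    ring
  rw [hexp]
  nlinarith [mul_pos hc hc]

lemma tendsto_v : Tendsto (fun k : ℕ => (4 * (k:ℝ) + 1) * c k ^ 2) atTop (𝓝 (4 / π)) := by
  have hratio : Tendsto (fun k : ℕ => ((4 * (k:ℝ) + 1) / (2 * k + 1))) atTop (𝓝 2) := by
    have h1 : Tendsto (fun k : ℕ => ((k:ℝ) + 1)⁻¹) atTop (𝓝 0) :=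
      tendsto_inv_atTop_zero.comp
        (tendsto_atTop_add_const_right _ 1 tendsto_natCast_atTop_atTop)
    have heq : ∀ k : ℕ, (4 * (k:ℝ) + 1) / (2 * k + 1) = 2 - (2 * (k:ℝ) + 1)⁻¹ := by
      intro k
      have : (2 * (k:ℝ) + 1) > 0 := by positivity
      field_simp
      ring
    simp only [heq]
    have h2 : Tendsto (fun k : ℕ => (2 * (k:ℝ) + 1)⁻¹) atTop (𝓝 0) := by
      apply tendsto_inv_atTop_zero.comp
      apply tendsto_atTop_add_const_right
      exact (tendsto_natCast_atTop_atTop (R := ℝ)).const_mul_atTop (by norm_num)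
    have := (tendsto_const_nhds (x := (2:ℝ))).sub h2
    simpa using this
  have heq : ∀ k : ℕ, (4 * (k:ℝ) + 1) * c k ^ 2
      = ((4 * (k:ℝ) + 1) / (2 * k + 1)) * ((2 * (k:ℝ) + 1) * c k ^ 2) := by
    intro k
    have : (2 * (k:ℝ) + 1) > 0 := by positivity
    field_simp
  simp only [heq]
  have hmul := hratio.mul tendsto_t
  have h4 : (4:ℝ) / π = 2 * (2 / π) := by ring
  rw [h4]
  exact hmul

lemma pic_lt (k : ℕ) : π * c k ^ 2 < 4 / (4 * (k:ℝ) + 1) := by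
  have hlim : (4 * (k:ℝ) + 1) * c k ^ 2 < 4 / π := by
    have h1 : (4 * (k:ℝ) + 1) * c k ^ 2 < (4 * ((k+1:ℕ):ℝ) + 1) * c (k+1) ^ 2 :=
      mono_v (Nat.lt_succ_self k)
    have h2 : (4 * ((k+1:ℕ):ℝ) + 1) * c (k+1) ^ 2 ≤ 4 / π := by
      apply ge_of_tendsto tendsto_v
      filter_upwards [eventually_ge_atTop (k+1)] with m hm
      exact mono_v.monotone hm
    linarith
  have hpi := Real.pi_pos
  have h4k : (0:ℝ) < 4 * k + 1 := by positivity
  rw [lt_div_iff₀ hpi] at hlim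
  rw [lt_div_iff₀ h4k]
  nlinarith



noncomputable def aseq (k : ℕ) : ℝ := ((k:ℝ) + 1)⁻¹ - π * c (k + 1) ^ 2

lemma aseq_nonneg (k : ℕ) : 0 ≤ aseq k := by
  have h := pic_lt (k + 1)
  push_cast at h
  have h2 : (4:ℝ) / (4 * ((k:ℝ) + 1) + 1) ≤ ((k:ℝ) + 1)⁻¹ := by
    rw [inv_eq_one_div, div_le_div_iff₀ (by positivity) (by positivity)]
    linarith
  unfold aseq
  linarith

lemma summable_bound : Summable fun k : ℕ => (((k:ℝ) + 1)⁻¹) ^ 2 := by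
  have h0 : Summable fun n : ℕ => 1 / (n : ℝ) ^ 2 :=
    summable_one_div_nat_pow.mpr one_lt_two
  have h1 := (summable_nat_add_iff 1).mpr h0
  apply h1.congr
  intro n
  push_cast
  rw [inv_pow, inv_eq_one_div]

lemma aseq_le (k : ℕ) : aseq k ≤ (((k:ℝ) + 1)⁻¹) ^ 2 := by
  have h := pic_gt (k + 1)
  unfold aseq
  push_cast at h
  have h1 : (0:ℝ) < (k:ℝ) + 1 := by positivity
  have h2 : (0:ℝ) < 2 * ((k:ℝ) + 1) + 1 := by positivity
  have key : ((k:ℝ) + 1)⁻¹ - 2 / (2 * ((k:ℝ) + 1) + 1) ≤ (((k:ℝ) + 1)⁻¹) ^ 2 := by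
    rw [inv_eq_one_div]
    rw [div_sub_div _ _ h1.ne' h2.ne', div_pow, div_le_div_iff₀ (by positivity) (by positivity)]
    ring_nf
    nlinarith [sq_nonneg ((k:ℝ)+1), h1]
  linarith

lemma summable_aseq : Summable aseq :=
  Summable.of_nonneg_of_le aseq_nonneg aseq_le summable_bound

/-- Evaluation of the series: `∑ (1/(k+1) - π c_{k+1}²) = π - log 16`. -/
lemma hasSum_aseq : HasSum aseq (π - Real.log 16) := by
  have hsm := summable_aseq
  suffices hts : ∑' k, aseq k = π - Real.log 16 by rw [← hts]; exact hsm.hasSum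
  have T2 : ∀ n : ℕ, (∑' k, aseq k * (xseq n) ^ (k + 1))
      = π - ((∫ t in (0:ℝ)..π, 1 / Real.sqrt (1 - xseq n * Real.sin t ^ 2))
        + Real.log (1 - xseq n)) := by
    intro n
    have hx0 : (0:ℝ) ≤ xseq n := by linarith [(xseq_mem n).1]
    have hx1 : xseq n < 1 := (xseq_mem n).2
    obtain ⟨x, hxdef⟩ : ∃ x, xseq n = x := ⟨_, rfl⟩
    rw [hxdef] at hx0 hx1 ⊢
    obtain ⟨K, hKdef⟩ : ∃ K, (∫ t in (0:ℝ)..π, 1 / Real.sqrt (1 - x * Real.sin t ^ 2)) = K :=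
      ⟨_, rfl⟩
    rw [hKdef]
    have hK := hasSum_K hx0 hx1
    rw [hKdef] at hK
    have hshift : HasSum (fun k => π * c (k + 1) ^ 2 * x ^ (k + 1)) (K - π) := by
      apply (hasSum_nat_add_iff (f := fun k => π * c k ^ 2 * x ^ k) 1).mpr
      have he : K - π + ∑ i ∈ Finset.range 1, π * c i ^ 2 * x ^ i = K := by
        simp [c_zero]
      rw [he]
      exact hK
    have hlog : HasSum (fun k : ℕ => x ^ (k + 1) / (k + 1)) (-Real.log (1 - x)) :=
      hasSum_pow_div_log_of_abs_lt_one (by rw [abs_of_nonneg hx0]; exact hx1)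
    have hcomb := hlog.sub hshift
    have heq : (fun k : ℕ => x ^ (k + 1) / ((k:ℝ) + 1) - π * c (k + 1) ^ 2 * x ^ (k + 1))
        = fun k => aseq k * x ^ (k + 1) := by
      funext k
      unfold aseq
      rw [div_eq_mul_inv]
      ring
    rw [heq] at hcomb
    rw [hcomb.tsum_eq]
    ring
  have T1 : Tendsto (fun n => ∑' k, aseq k * (xseq n) ^ (k + 1)) atTop
      (𝓝 (∑' k, aseq k)) := by
    refine tendsto_tsum_of_dominated_convergence (𝓕 := atTop)
      (f := fun n (k : ℕ) => aseq k * xseq n ^ (k + 1)) (g := fun k => aseq k)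
      (bound := fun k => (((k:ℝ) + 1)⁻¹) ^ 2) ?_ ?_ ?_
    · exact summable_bound
    · intro k
      have hp : Tendsto (fun n => (xseq n) ^ (k + 1)) atTop (𝓝 1) := by
        have := tendsto_xseq.pow (k + 1)
        simpa using this
      have := hp.const_mul (aseq k)
      simpa using this
    · refine Filter.Eventually.of_forall fun n => fun k => ?_
      have hx0 : (0:ℝ) ≤ xseq n := by linarith [(xseq_mem n).1]
      have hx1 : xseq n ≤ 1 := le_of_lt (xseq_mem n).2
      have hxp : (0:ℝ) ≤ (xseq n) ^ (k + 1) := by positivity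
      have hxle : (xseq n) ^ (k + 1) ≤ 1 := pow_le_one₀ hx0 hx1
      rw [Real.norm_eq_abs, abs_mul, abs_of_nonneg (aseq_nonneg k), abs_of_nonneg hxp]
      calc aseq k * (xseq n) ^ (k + 1) ≤ aseq k * 1 :=
            mul_le_mul_of_nonneg_left hxle (aseq_nonneg k)
        _ = aseq k := mul_one _
        _ ≤ (((k:ℝ) + 1)⁻¹) ^ 2 := aseq_le k
  have T3 : Tendsto (fun n => π - ((∫ t in (0:ℝ)..π, 1 / Real.sqrt (1 - xseq n * Real.sin t ^ 2))
      + Real.log (1 - xseq n))) atTop (𝓝 (π - Real.log 16)) :=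
    (tendsto_const_nhds (x := π)).sub tendsto_Klog
  have T1' : Tendsto (fun n => ∑' k, aseq k * (xseq n) ^ (k + 1)) atTop
      (𝓝 (π - Real.log 16)) := by
    simp only [T2]
    exact T3
  exact tendsto_nhds_unique T1 T1'



noncomputable def SG (n : ℕ) : ℝ := ∑ k ∈ Finset.range (n + 1), π * c k ^ 2

noncomputable def e (n : ℕ) : ℝ :=
  SG n - Real.log (16 * ((n : ℝ) + 1)) + 1 / (4 * ((n : ℝ) + 1))

lemma key_ineq (n : ℕ) :
    (4:ℝ) / (4 * (n:ℝ) + 5) ≤ ((n:ℝ)+2)⁻¹ + (((n:ℝ)+2)⁻¹)^2/2 + (((n:ℝ)+2)⁻¹)^3/3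
      + (((n:ℝ)+2)⁻¹)^4/4 + (1/(4*((n:ℝ)+1)) - 1/(4*((n:ℝ)+2))) := by
  have hN : (0:ℝ) ≤ (n:ℝ) := Nat.cast_nonneg n
  rw [← sub_nonneg]
  have hid : ((n:ℝ)+2)⁻¹ + (((n:ℝ)+2)⁻¹)^2/2 + (((n:ℝ)+2)⁻¹)^3/3
      + (((n:ℝ)+2)⁻¹)^4/4 + (1/(4*((n:ℝ)+1)) - 1/(4*((n:ℝ)+2))) - 4 / (4 * (n:ℝ) + 5)
      = (7 + 11*(n:ℝ) + 8*(n:ℝ)^2 + (n:ℝ)^3)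
        / (12 * ((n:ℝ)+2)^4 * ((n:ℝ)+1) * (4*(n:ℝ)+5)) := by
    field_simp
    ring
  rw [hid]
  positivity

lemma log_lb (n : ℕ) :
    ((n:ℝ)+2)⁻¹ + (((n:ℝ)+2)⁻¹)^2/2 + (((n:ℝ)+2)⁻¹)^3/3 + (((n:ℝ)+2)⁻¹)^4/4
      ≤ -Real.log (1 - ((n:ℝ)+2)⁻¹) := by
  have hy0 : (0:ℝ) < ((n:ℝ)+2)⁻¹ := by positivity
  have hy1 : ((n:ℝ)+2)⁻¹ < 1 := by
    rw [inv_lt_one_iff₀]; right; linarith [Nat.cast_nonneg (α := ℝ) n]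
  have hs := hasSum_pow_div_log_of_abs_lt_one
    (x := ((n:ℝ)+2)⁻¹) (by rw [abs_of_nonneg hy0.le]; exact hy1)
  have hle := Summable.sum_le_tsum (Finset.range 4)
    (fun k _ => by positivity) hs.summable
  rw [hs.tsum_eq] at hle
  calc ((n:ℝ)+2)⁻¹ + (((n:ℝ)+2)⁻¹)^2/2 + (((n:ℝ)+2)⁻¹)^3/3 + (((n:ℝ)+2)⁻¹)^4/4
      = ∑ k ∈ Finset.range 4, (((n:ℝ)+2)⁻¹) ^ (k+1) / ((k:ℝ)+1) := by
        simp only [Finset.sum_range_succ, Finset.sum_range_zero]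
        push_cast
        ring
    _ ≤ -Real.log (1 - ((n:ℝ)+2)⁻¹) := hle

lemma strictAnti_e : StrictAnti e := by
  apply strictAnti_nat_of_succ_lt
  intro n
  have hN : (0:ℝ) ≤ (n:ℝ) := Nat.cast_nonneg n
  have hpic := pic_lt (n + 1)
  have hpicc : π * c (n+1) ^ 2 < 4 / (4 * (n:ℝ) + 5) := by
    push_cast at hpic
    have h45 : 4 * ((n:ℝ) + 1) + 1 = 4 * (n:ℝ) + 5 := by ring
    rw [h45] at hpic
    exact hpic
  have hSG : SG (n+1) = SG n + π * c (n+1) ^ 2 := by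
    unfold SG
    rw [Finset.sum_range_succ]
  have hlogdiff : Real.log (16 * ((n:ℝ) + 2)) - Real.log (16 * ((n:ℝ) + 1))
      = -Real.log (1 - ((n:ℝ)+2)⁻¹) := by
    have h1 : (1:ℝ) - ((n:ℝ)+2)⁻¹ = ((n:ℝ)+1)/((n:ℝ)+2) := by
      field_simp
      ring_nf
    rw [h1, Real.log_div (by positivity) (by positivity),
      Real.log_mul (by norm_num) (by positivity),
      Real.log_mul (by norm_num) (by positivity)]
    ring
  have hlb := log_lb n
  have hkey := key_ineq n
  show e (n + 1) < e n
  unfold e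
  push_cast
  have hc2 : ((n:ℝ) + 1 + 1) = (n:ℝ) + 2 := by ring
  rw [hc2, hSG]
  linarith [hpicc, hlb, hkey, hlogdiff]

lemma tendsto_aseq_sum : Tendsto (fun n => ∑ k ∈ Finset.range (n+1), aseq k) atTop
    (𝓝 (π - Real.log 16)) :=
  hasSum_aseq.tendsto_sum_nat.comp (tendsto_add_atTop_nat 1)

lemma harmonic_cast (n : ℕ) :
    ((harmonic (n+1) : ℚ) : ℝ) = ∑ k ∈ Finset.range (n+1), ((k:ℝ) + 1)⁻¹ := by
  rw [harmonic]
  push_cast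
  rfl

lemma SG_eq (n : ℕ) : SG n = ((harmonic (n+1) : ℚ) : ℝ)
    - (∑ k ∈ Finset.range (n+1), aseq k) - π * c (n+1) ^ 2 + π := by
  have hsum : ∑ k ∈ Finset.range (n+1), aseq k
      = ((harmonic (n+1) : ℚ) : ℝ) - ∑ k ∈ Finset.range (n+1), π * c (k+1) ^ 2 := by
    unfold aseq
    rw [Finset.sum_sub_distrib, harmonic_cast]
  have hshift : ∑ k ∈ Finset.range (n+2), π * c k ^ 2
      = (∑ k ∈ Finset.range (n+1), π * c (k+1) ^ 2) + π * c 0 ^ 2 :=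
    Finset.sum_range_succ' _ _
  have hSGs : SG (n+1) = SG n + π * c (n+1) ^ 2 := Finset.sum_range_succ _ _
  have hSG1 : SG (n+1) = ∑ k ∈ Finset.range (n+2), π * c k ^ 2 := rfl
  rw [c_zero] at hshift
  have : SG n + π * c (n+1)^2 = (∑ k ∈ Finset.range (n+1), π * c (k+1) ^ 2) + π := by
    rw [← hSGs, hSG1, hshift]; ring
  linarith [hsum, this]

lemma tendsto_picsq_zero : Tendsto (fun n => π * c (n+1) ^ 2) atTop (𝓝 0) := by
  apply squeeze_zero (fun n => by positivity)
    (fun n => le_of_lt (by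
      have := pic_lt (n+1)
      push_cast at this
      exact this))
  have : Tendsto (fun n : ℕ => 4 * (4 * ((n:ℝ)+1) + 1)⁻¹) atTop (𝓝 (4 * 0)) := by
    apply Tendsto.const_mul
    apply tendsto_inv_atTop_zero.comp
    apply tendsto_atTop_add_const_right
    exact ((tendsto_natCast_atTop_atTop (R := ℝ)).atTop_add tendsto_const_nhds).const_mul_atTop
      (by norm_num)
  simp only [div_eq_mul_inv]
  simpa using this

lemma tendsto_e : Tendsto e atTop (𝓝 Real.eulerMascheroniConstant) := by
  have hdecomp : ∀ n : ℕ, e n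
      = (π - Real.log 16 - ∑ k ∈ Finset.range (n+1), aseq k)
        + Real.eulerMascheroniSeq (n+1)
        + (Real.log ((n:ℝ)+2) - Real.log ((n:ℝ)+1))
        - π * c (n+1) ^ 2 + 1 / (4 * ((n:ℝ) + 1)) := by
    intro n
    unfold e
    rw [SG_eq n]
    rw [Real.eulerMascheroniSeq]
    push_cast
    rw [Real.log_mul (by norm_num) (by positivity)]
    ring
  rw [funext hdecomp]
  have limA : Tendsto (fun n => π - Real.log 16 - ∑ k ∈ Finset.range (n+1), aseq k)
      atTop (𝓝 0) := by
    have := (tendsto_const_nhds (x := π - Real.log 16)).sub tendsto_aseq_sum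
    simpa using this
  have limB : Tendsto (fun n : ℕ => Real.eulerMascheroniSeq (n+1)) atTop
      (𝓝 Real.eulerMascheroniConstant) :=
    Real.tendsto_eulerMascheroniSeq.comp (tendsto_add_atTop_nat 1)
  have limC : Tendsto (fun n : ℕ => Real.log ((n:ℝ)+2) - Real.log ((n:ℝ)+1)) atTop (𝓝 0) := by
    have heq : ∀ n : ℕ, Real.log ((n:ℝ)+2) - Real.log ((n:ℝ)+1)
        = Real.log (1 + ((n:ℝ)+1)⁻¹) := by
      intro n
      rw [show (1:ℝ) + ((n:ℝ)+1)⁻¹ = ((n:ℝ)+2)/((n:ℝ)+1) by field_simp; ring]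
      rw [Real.log_div (by positivity) (by positivity)]
    simp only [heq]
    have harg : Tendsto (fun n : ℕ => 1 + ((n:ℝ)+1)⁻¹) atTop (𝓝 1) := by
      have hinv : Tendsto (fun n : ℕ => ((n:ℝ)+1)⁻¹) atTop (𝓝 0) :=
        tendsto_inv_atTop_zero.comp
          (tendsto_atTop_add_const_right _ 1 tendsto_natCast_atTop_atTop)
      have := (tendsto_const_nhds (x := (1:ℝ))).add hinv
      simpa using this
    have hcont := (Real.continuousAt_log (by norm_num : (1:ℝ) ≠ 0)).tendsto.comp harg
    simpa [Function.comp_def] using hcont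
  have limE : Tendsto (fun n : ℕ => 1 / (4 * ((n:ℝ) + 1))) atTop (𝓝 0) := by
    simp only [one_div]
    apply tendsto_inv_atTop_zero.comp
    apply Tendsto.const_mul_atTop (by norm_num : (0:ℝ) < 4)
    exact tendsto_atTop_add_const_right _ 1 tendsto_natCast_atTop_atTop
  have := ((((limA.add limB).add limC).sub tendsto_picsq_zero).add limE)
  simpa using this

end LandauAux

theorem landau_lower_bound_order_one (n : ℕ) :
    Real.log (16 * ((n : ℝ) + 1)) + Real.eulerMascheroniConstant - 1 / (4 * ((n : ℝ) + 1)) <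
      Real.pi * landauG n := by
  have hG : Real.pi * landauG n = LandauAux.SG n := by
    unfold landauG LandauAux.SG
    rw [Finset.mul_sum]
    refine Finset.sum_congr rfl fun k _ => ?_
    rw [← LandauAux.choose_eq_c k]
  have h1 : Real.eulerMascheroniConstant ≤ LandauAux.e (n+1) := by
    apply le_of_tendsto LandauAux.tendsto_e
    filter_upwards [eventually_ge_atTop (n+1)] with m hm
    exact LandauAux.strictAnti_e.antitone hm
  have h2 : LandauAux.e (n+1) < LandauAux.e n := LandauAux.strictAnti_e (Nat.lt_succ_self n)
  have h3 : Real.eulerMascheroniConstant < LandauAux.e n := lt_of_le_of_lt h1 h2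
  unfold LandauAux.e at h3
  rw [hG]
  linarith
end

section
/- Let \varepsilon_l(N) be a real sequence (N ranging over positive integers) with \varepsilon_l(N) \to 0 as N \to \infty, satisfying \varepsilon_l(N+1) - (2 - 1/N + 1/(4N^2))\varepsilon_l(N) + (1 - 1/(2N))^2 \varepsilon_l(N-1) = R(N) for N \ge 2 where R(N) > 0 for all N \ge 2, and suppose \varepsilon_l(N) > 0 for all sufficiently large N. Then \varepsilon_l(N) > 0 for all N \ge 2. -/
open Filter

theorem maximum_principle_difference_equation (ε R : ℕ → ℝ)
    (hlim : Tendsto ε atTop (nhds 0))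
    (heq : ∀ N : ℕ, 2 ≤ N →
      ε (N + 1) - (2 - 1 / (N : ℝ) + 1 / (4 * (N : ℝ) ^ 2)) * ε N
        + (1 - 1 / (2 * (N : ℝ))) ^ 2 * ε (N - 1) = R N)
    (hR : ∀ N : ℕ, 2 ≤ N → 0 < R N)
    (hpos : ∀ᶠ N in atTop, 0 < ε N) :
    ∀ N : ℕ, 2 ≤ N → 0 < ε N := by
  classical
  by_contra h
  push_neg at h
  obtain ⟨M, hM2, hMle⟩ := h
  obtain ⟨N₀, hN₀⟩ := eventually_atTop.mp hpos
  set B := max N₀ M with hB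
  set K := Nat.findGreatest (fun n => ε n ≤ 0) B with hKdef
  have hKge : M ≤ K := Nat.le_findGreatest (le_max_right _ _) hMle
  have hK2 : 2 ≤ K := le_trans hM2 hKge
  have hεK : ε K ≤ 0 := by simpa using Nat.findGreatest_spec (P := fun n => ε n ≤ 0) (le_max_right N₀ M) hMle
  have hgt : ∀ n, K < n → 0 < ε n := by
    intro n hn
    by_cases hle : n ≤ B
    · by_contra hc
      push_neg at hc
      exact Nat.findGreatest_is_greatest hn hle hc
    · exact hN₀ n (by omega)
  -- rewritten recurrence
  have hrec : ∀ n : ℕ, 2 ≤ n →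
      ε (n + 1) - ε n = (1 - 1 / (2 * (n : ℝ))) ^ 2 * (ε n - ε (n - 1)) + R n := by
    intro n hn
    have h1 := heq n hn
    have hn0 : (n : ℝ) ≠ 0 := by
      exact_mod_cast (by omega : n ≠ 0)
    have hident : (2 - 1 / (n : ℝ) + 1 / (4 * (n : ℝ) ^ 2))
        = 1 + (1 - 1 / (2 * (n : ℝ))) ^ 2 := by
      field_simp
      ring
    rw [hident] at h1
    linarith [h1]
  -- differences are positive from K on
  have hd : ∀ n, K ≤ n → 0 < ε (n + 1) - ε n := by
    intro n hn
    induction n with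
    | zero => omega
    | succ m ih =>
      rcases Nat.lt_or_ge K (m + 1) with hlt | hge
      · have hm : K ≤ m := by omega
        have ihm := ih hm
        have h2 : 2 ≤ m + 1 := by omega
        have hr := hrec (m + 1) h2
        simp only [Nat.add_sub_cancel] at hr
        have hb : (0 : ℝ) ≤ (1 - 1 / (2 * ((m + 1 : ℕ) : ℝ))) ^ 2 := sq_nonneg _
        have hRm := hR (m + 1) h2
        nlinarith [mul_nonneg hb (le_of_lt ihm)]
      · have hKm : K = m + 1 := by omega
        have := hgt (m + 2) (by omega)
        rw [← hKm] at *
        have := hgt (K + 1) (by omega)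
        linarith
  have hmono : ∀ n, K + 1 ≤ n → ε (K + 1) ≤ ε n := by
    intro n hn
    induction n with
    | zero => omega
    | succ m ih =>
      rcases Nat.lt_or_ge (K + 1) (m + 1) with hlt | hge
      · have h1 := ih (by omega)
        have h2 := hd m (by omega)
        linarith
      · have : K + 1 = m + 1 := by omega
        rw [this]
  have hle0 : ε (K + 1) ≤ 0 :=
    ge_of_tendsto hlim (eventually_atTop.mpr ⟨K + 1, hmono⟩)
  have hgt0 : 0 < ε (K + 1) := hgt (K + 1) (by omega)
  linarith
end
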